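/- arXiv:2507.14127 — 5 statements merged into one kernel-verified Lean document; each statement's English description precedes it below -/
import Mathlib

section
/- Golden–Thompson inequality for the second-order cone Jordan algebra: for any m, q ∈ R^n, Tr(e^{m+q}) ≤ Tr(e^m ∘ e^q) = 2 (e^m)ᵀ e^q, where exponentials and trace are taken in the Euclidean Jordan algebra of the second-order cone. -/
open Real Finset

noncomputable section

namespace SOC

/-- A vector in `ℝ^{1+d}` split into a scalar part and a vector part. -/
abbrev Vec (d : ℕ) := ℝ × EuclideanSpace ℝ (Fin d)

variable {d : ℕ}

/-- Membership in the second-order (Lorentz) cone: `‖v⃗‖ ≤ v₀`. -/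
def inCone (v : Vec d) : Prop := ‖v.2‖ ≤ v.1

/-- Euclidean inner product on `ℝ^{1+d}`. -/
def dotp (v w : Vec d) : ℝ := v.1 * w.1 + ∑ i, v.2 i * w.2 i

/-- Euclidean norm on `ℝ^{1+d}`. -/
def enorm (v : Vec d) : ℝ := Real.sqrt (v.1 ^ 2 + ‖v.2‖ ^ 2)

/-- The soc norm `|v₀| + ‖v⃗‖`. -/
def socNorm (v : Vec d) : ℝ := |v.1| + ‖v.2‖

/-- Jordan-algebra trace `Tr(v) = 2 v₀`. -/
def jtr (v : Vec d) : ℝ := 2 * v.1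

/-- Jordan (circle) product. -/
def jmul (v w : Vec d) : Vec d := (dotp v w, v.1 • w.2 + w.1 • v.2)

/-- The eigenvalue `λ₊ = v₀ + ‖v⃗‖`. -/
def lamP (v : Vec d) : ℝ := v.1 + ‖v.2‖

/-- The eigenvalue `λ₋ = v₀ - ‖v⃗‖`. -/
def lamM (v : Vec d) : ℝ := v.1 - ‖v.2‖

/-- Jordan frame eigenvector `c₊ = (1/2)(1, v⃗/‖v⃗‖)`. -/
def cP (v : Vec d) : Vec d := (1 / 2, (1 / (2 * ‖v.2‖)) • v.2)

/-- Jordan frame eigenvector `c₋ = (1/2)(1, -v⃗/‖v⃗‖)`. -/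
def cM (v : Vec d) : Vec d := (1 / 2, (-(1 / (2 * ‖v.2‖))) • v.2)

/-- Jordan-algebra exponential `e^v = e^{λ₊} c₊ + e^{λ₋} c₋`. -/
def jexp (v : Vec d) : Vec d :=
  ((Real.exp (lamP v) + Real.exp (lamM v)) / 2,
   ((Real.exp (lamP v) - Real.exp (lamM v)) / (2 * ‖v.2‖)) • v.2)

/-- Jordan-algebra square root `√v = √λ₊ c₊ + √λ₋ c₋`. -/
def jsqrt (v : Vec d) : Vec d :=
  ((Real.sqrt (lamP v) + Real.sqrt (lamM v)) / 2,
   ((Real.sqrt (lamP v) - Real.sqrt (lamM v)) / (2 * ‖v.2‖)) • v.2)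

/-- The cone partial order `u ⪯ v`. -/
def cleq (u v : Vec d) : Prop := inCone (v - u)

/-- The identity element `e = (1, 0⃗)`. -/
def idel (d : ℕ) : Vec d := (1, 0)

/-- Arrowhead matrix of `v`. -/
def arw (v : Vec d) : Matrix (Unit ⊕ Fin d) (Unit ⊕ Fin d) ℝ :=
  Matrix.fromBlocks (Matrix.of fun _ _ => v.1) (Matrix.of fun _ i => v.2 i)
    (Matrix.of fun i _ => v.2 i) (v.1 • 1)

/-- View a pair as a plain vector indexed by `Unit ⊕ Fin d`. -/
def toVec (v : Vec d) : (Unit ⊕ Fin d) → ℝ := Sum.elim (fun _ => v.1) (fun i => v.2 i)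

/-- A multicone vector: one Lorentz-cone vector per cone `k`. -/
abbrev MVec {r : ℕ} (n : Fin r → ℕ) := ∀ k, Vec (n k)

variable {r : ℕ} {n : Fin r → ℕ}

/-- Multicone trace. -/
def mtr (v : MVec n) : ℝ := ∑ k, jtr (v k)

/-- Multicone Jordan exponential (cone-wise). -/
def mjexp (v : MVec n) : MVec n := fun k => jexp (v k)

/-- Multicone Jordan product (cone-wise). -/
def mjmul (v w : MVec n) : MVec n := fun k => jmul (v k) (w k)

/-- Multicone cone membership. -/
def minCone (v : MVec n) : Prop := ∀ k, inCone (v k)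

/-- Multicone identity element. -/
def mid (n : Fin r → ℕ) : MVec n := fun k => idel (n k)

end SOC

section GTaux
open Real

lemma sinh_le_mul_cosh {y : ℝ} (hy : 0 ≤ y) : Real.sinh y ≤ y * Real.cosh y := by
  have hd : ∀ x : ℝ, HasDerivAt (fun y : ℝ => y * Real.cosh y - Real.sinh y)
      (x * Real.sinh x) x := by
    intro x
    have h1 := ((hasDerivAt_id x).mul (Real.hasDerivAt_cosh x)).sub (Real.hasDerivAt_sinh x)
    exact h1.congr_deriv (by simp)
  have hmono : MonotoneOn (fun y : ℝ => y * Real.cosh y - Real.sinh y) (Set.Ici 0) := by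
    apply monotoneOn_of_deriv_nonneg (convex_Ici 0)
    · exact (Continuous.sub (continuous_id.mul Real.continuous_cosh) Real.continuous_sinh).continuousOn
    · intro x _; exact (hd x).differentiableAt.differentiableWithinAt
    · intro x hx
      rw [interior_Ici] at hx
      rw [(hd x).deriv]
      exact mul_nonneg (le_of_lt hx) (Real.sinh_nonneg_iff.mpr (le_of_lt hx))
  have := hmono (Set.self_mem_Ici) (Set.mem_Ici.mpr hy) hy
  simpa using this

lemma convexOn_cosh_sqrt : ConvexOn ℝ (Set.Ici 0) (fun x : ℝ => Real.cosh (Real.sqrt x)) := by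
  set g : ℝ → ℝ := fun x => Real.cosh (Real.sqrt x) with hgdef
  set G : ℝ → ℝ := fun x => Real.sinh (Real.sqrt x) * (1 / (2 * Real.sqrt x)) with hGdef
  have hG : ∀ x ∈ Set.Ioi (0:ℝ), HasDerivAt g (G x) x := by
    intro x hx
    exact (Real.hasDerivAt_cosh (Real.sqrt x)).comp x (Real.hasDerivAt_sqrt (ne_of_gt hx))
  have hEq : Set.EqOn (deriv g) G (Set.Ioi 0) := fun x hx => (hG x hx).deriv
  have hG' : ∀ x ∈ Set.Ioi (0:ℝ), HasDerivAt G
      ((Real.cosh (Real.sqrt x) * (1 / (2 * Real.sqrt x)) * (2 * Real.sqrt x)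
        - Real.sinh (Real.sqrt x) * (2 * (1 / (2 * Real.sqrt x)))) / (2 * Real.sqrt x)^2) x := by
    intro x hx
    have hsx : Real.sqrt x ≠ 0 := ne_of_gt (Real.sqrt_pos.mpr hx)
    have hn : HasDerivAt (fun x => Real.sinh (Real.sqrt x))
        (Real.cosh (Real.sqrt x) * (1 / (2 * Real.sqrt x))) x :=
      (Real.hasDerivAt_sinh (Real.sqrt x)).comp x (Real.hasDerivAt_sqrt (ne_of_gt hx))
    have hden : HasDerivAt (fun x : ℝ => 2 * Real.sqrt x) (2 * (1 / (2 * Real.sqrt x))) x :=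
      (Real.hasDerivAt_sqrt (ne_of_gt hx)).const_mul 2
    have := hn.div hden (by positivity)
    have hfun : G = (fun x => Real.sinh (Real.sqrt x)) / (fun x : ℝ => 2 * Real.sqrt x) := by
      ext y; simp [hGdef, div_eq_mul_inv]
    rw [hfun]; exact this
  apply convexOn_of_deriv2_nonneg (convex_Ici 0)
  · exact (Real.continuous_cosh.comp Real.continuous_sqrt).continuousOn
  · rw [interior_Ici]
    intro x hx; exact (hG x hx).differentiableAt.differentiableWithinAt
  · rw [interior_Ici]
    refine DifferentiableOn.congr (fun x hx => (hG' x hx).differentiableAt.differentiableWithinAt) hEq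
  · rw [interior_Ici]
    intro x hx
    have hD2 : deriv^[2] g x = deriv (deriv g) x := by
      rw [Function.iterate_succ_apply', Function.iterate_one]
    rw [hD2]
    have : deriv (deriv g) x = deriv G x := by
      apply Filter.EventuallyEq.deriv_eq
      exact Filter.eventuallyEq_of_mem (isOpen_Ioi.mem_nhds hx) hEq
    rw [this, (hG' x hx).deriv]
    have hxpos : (0:ℝ) < x := hx
    have hsx : (0:ℝ) < Real.sqrt x := Real.sqrt_pos.mpr hxpos
    apply div_nonneg _ (by positivity)
    have h1 : Real.cosh (Real.sqrt x) * (1 / (2 * Real.sqrt x)) * (2 * Real.sqrt x)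
        = Real.cosh (Real.sqrt x) := by field_simp
    have h2 : Real.sinh (Real.sqrt x) * (2 * (1 / (2 * Real.sqrt x)))
        = Real.sinh (Real.sqrt x) / Real.sqrt x := by field_simp
    rw [h1, h2, sub_nonneg, div_le_iff₀ hsx]
    have := sinh_le_mul_cosh hsx.le
    linarith


lemma GT_key {s t c : ℝ} (hs : 0 ≤ s) (ht : 0 ≤ t) (hc : |c| ≤ s * t)
    (hcvx : ConvexOn ℝ (Set.Ici 0) (fun x : ℝ => Real.cosh (Real.sqrt x))) :
    Real.cosh (Real.sqrt (s^2 + t^2 + 2*c)) ≤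
      Real.cosh s * Real.cosh t + (Real.sinh s / s) * (Real.sinh t / t) * c := by
  rcases eq_or_lt_of_le hs with h | hs'
  · have hc0 : c = 0 := by
      rw [← h] at hc; simp at hc
      exact hc
    rw [← h, hc0]
    simp [Real.sqrt_sq ht]
  rcases eq_or_lt_of_le ht with h | ht'
  · have hc0 : c = 0 := by
      rw [← h] at hc; simp at hc
      exact hc
    rw [← h, hc0]
    simp [Real.sqrt_sq hs]
  have hst : (0:ℝ) < s * t := mul_pos hs' ht'
  set θ : ℝ := c / (s * t) with hθdef
  have hcc : s * t * θ = c := by rw [hθdef]; field_simp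
  have hθabs : |θ| ≤ 1 := by
    rw [hθdef, abs_div, abs_of_pos hst]
    exact (div_le_one hst).mpr hc
  obtain ⟨hθ1, hθ2⟩ := abs_le.mp hθabs
  have ha : (0:ℝ) ≤ (1+θ)/2 := by linarith
  have hb : (0:ℝ) ≤ (1-θ)/2 := by linarith
  have hab : (1+θ)/2 + (1-θ)/2 = 1 := by ring
  have hx : ((s+t)^2 : ℝ) ∈ Set.Ici (0:ℝ) := Set.mem_Ici.mpr (by positivity)
  have hy : ((s-t)^2 : ℝ) ∈ Set.Ici (0:ℝ) := Set.mem_Ici.mpr (by positivity)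
  have h := hcvx.2 hx hy ha hb hab
  simp only [smul_eq_mul] at h
  have harg : (1+θ)/2*(s+t)^2 + (1-θ)/2*(s-t)^2 = s^2 + t^2 + 2*c := by
    linear_combination 2*hcc
  have hrhs : (1+θ)/2 * Real.cosh (s+t) + (1-θ)/2 * Real.cosh (s-t)
      = Real.cosh s * Real.cosh t + (Real.sinh s / s) * (Real.sinh t / t) * c := by
    rw [Real.cosh_add, Real.cosh_sub]
    have h2 : (Real.sinh s / s) * (Real.sinh t / t) * c = Real.sinh s * Real.sinh t * θ := by
      rw [hθdef]; field_simp
    rw [h2]; ring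
  calc Real.cosh (Real.sqrt (s^2 + t^2 + 2*c))
      = Real.cosh (Real.sqrt ((1+θ)/2*(s+t)^2 + (1-θ)/2*(s-t)^2)) := by rw [harg]
    _ ≤ (1+θ)/2 * Real.cosh (Real.sqrt ((s+t)^2))
        + (1-θ)/2 * Real.cosh (Real.sqrt ((s-t)^2)) := h
    _ = (1+θ)/2 * Real.cosh (s+t) + (1-θ)/2 * Real.cosh (s-t) := by
        rw [Real.sqrt_sq (by positivity), Real.sqrt_sq_eq_abs, Real.cosh_abs]
    _ = _ := hrhs

lemma GT_key2 (a b : ℝ) {s t c : ℝ} (hs : 0 ≤ s) (ht : 0 ≤ t) (hc : |c| ≤ s * t)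
    (hcvx : ConvexOn ℝ (Set.Ici 0) (fun x : ℝ => Real.cosh (Real.sqrt x))) :
    Real.exp (a + b + Real.sqrt (s^2 + t^2 + 2*c))
      + Real.exp (a + b - Real.sqrt (s^2 + t^2 + 2*c)) ≤
    2 * ((Real.exp (a+s) + Real.exp (a-s))/2 * ((Real.exp (b+t) + Real.exp (b-t))/2)
      + (Real.exp (a+s) - Real.exp (a-s))/(2*s) * ((Real.exp (b+t) - Real.exp (b-t))/(2*t)) * c) := by
  have h := GT_key hs ht hc hcvx
  set u := Real.sqrt (s^2 + t^2 + 2*c)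
  calc Real.exp (a + b + u) + Real.exp (a + b - u) = 2 * Real.exp (a+b) * Real.cosh u := by
        rw [Real.cosh_eq, Real.exp_add (a+b) u, Real.exp_sub (a+b) u, Real.exp_neg]; ring
    _ ≤ 2 * Real.exp (a+b) * (Real.cosh s * Real.cosh t
          + (Real.sinh s / s) * (Real.sinh t / t) * c) :=
        mul_le_mul_of_nonneg_left h (by positivity)
    _ = _ := by
        simp only [Real.cosh_eq, Real.sinh_eq, Real.exp_add, Real.exp_sub, Real.exp_neg]
        ring

end GTaux


/-- Golden–Thompson inequality for the second-order cone Jordan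
algebra: `Tr(e^{m+q}) ≤ Tr(e^m ∘ e^q) = 2 (e^m)ᵀ e^q`. -/
theorem golden_thompson (d : ℕ) (m q : SOC.Vec d) :
    SOC.jtr (SOC.jexp (m + q)) ≤ SOC.jtr (SOC.jmul (SOC.jexp m) (SOC.jexp q)) ∧
    SOC.jtr (SOC.jmul (SOC.jexp m) (SOC.jexp q)) =
      2 * SOC.dotp (SOC.jexp m) (SOC.jexp q) := by
  refine ⟨?_, rfl⟩
  have hs : (0:ℝ) ≤ ‖m.2‖ := norm_nonneg _
  have ht : (0:ℝ) ≤ ‖q.2‖ := norm_nonneg _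
  have hc : |(inner ℝ m.2 q.2 : ℝ)| ≤ ‖m.2‖ * ‖q.2‖ := abs_real_inner_le_norm m.2 q.2
  have hnorm : ‖m.2 + q.2‖ = Real.sqrt (‖m.2‖^2 + ‖q.2‖^2 + 2 * (inner ℝ m.2 q.2 : ℝ)) := by
    rw [← Real.sqrt_sq (norm_nonneg (m.2 + q.2)), norm_add_sq_real]
    ring_nf
  have hsum : ∀ P Q : ℝ, ∑ i, (P • m.2) i * (Q • q.2) i = P * Q * (inner ℝ m.2 q.2 : ℝ) := by
    intro P Q
    simp only [PiLp.smul_apply, smul_eq_mul, PiLp.inner_apply, RCLike.inner_apply,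
      starRingEnd_apply, star_trivial]
    rw [Finset.mul_sum]
    exact Finset.sum_congr rfl fun i _ => by ring
  have h := GT_key2 m.1 q.1 hs ht hc convexOn_cosh_sqrt
  simp only [SOC.jtr, SOC.jexp, SOC.jmul, SOC.dotp, SOC.lamP, SOC.lamM,
    Prod.fst_add, Prod.snd_add, hsum, hnorm]
  set c := (inner ℝ m.2 q.2 : ℝ)
  set s := ‖m.2‖
  set t := ‖q.2‖
  set u := Real.sqrt (s^2 + t^2 + 2*c)
  have e1 : m.1 + q.1 + u = m.1 + q.1 + u := rfl
  linarith [h]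
end
end

section
/- Multiplicative weights regret bound for products of second-order cones: let M^{(0)},...,M^{(T-1)} be vectors in a product of r second-order cones satisfying 0 ⪯ M^{(t)} ⪯ e for all t, and for fixed 0 < δ ≤ 1 define the Gibbs iterates P^{(t)} = e^{δ Σ_{τ<t} M^{(τ)}} / Tr(e^{δ Σ_{τ<t} M^{(τ)}}). Then for any Q ⪰ 0 with Tr(Q) = 1, (1+δ) Σ_{t<T} Tr(M^{(t)} ∘ P^{(t)}) ≥ Σ_{t<T} Tr(M^{(t)} ∘ Q) − log(2r)/δ. -/
open Real Finset

noncomputable section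

lemma MW_convexOn_sinh : ConvexOn ℝ (Set.Ici (0:ℝ)) Real.sinh := by
  apply MonotoneOn.convexOn_of_deriv (convex_Ici 0) Real.continuous_sinh.continuousOn
    Real.differentiable_sinh.differentiableOn
  intro x hx y hy hxy
  rw [interior_Ici] at hx hy
  rw [Real.deriv_sinh]
  rw [Real.cosh_le_cosh]
  rw [abs_of_pos hx, abs_of_pos hy]
  exact hxy

lemma MW_sinh_div_mono {u v : ℝ} (hu : 0 < u) (huv : u ≤ v) :
    Real.sinh u / u ≤ Real.sinh v / v := by
  have h := MW_convexOn_sinh.secant_mono (a := 0) (x := u) (y := v)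
    (Set.self_mem_Ici) (Set.mem_Ici.2 hu.le) (Set.mem_Ici.2 (hu.trans_le huv).le)
    (ne_of_gt hu) (ne_of_gt (hu.trans_le huv)) huv
  simpa using h

lemma MW_convexOn_cosh_sqrt : ConvexOn ℝ (Set.Ici (0:ℝ)) (fun x => Real.cosh (Real.sqrt x)) := by
  have hd : ∀ x : ℝ, 0 < x → HasDerivAt (fun x => Real.cosh (Real.sqrt x))
      (Real.sinh (Real.sqrt x) * (1 / (2 * Real.sqrt x))) x := by
    intro x hx
    exact (Real.hasDerivAt_cosh _).comp x (hasDerivAt_sqrt (ne_of_gt hx))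
  apply MonotoneOn.convexOn_of_deriv (convex_Ici 0)
  · exact (Real.continuous_cosh.comp Real.continuous_sqrt).continuousOn
  · rw [interior_Ici]
    intro x hx
    exact (hd x hx).differentiableAt.differentiableWithinAt
  · rw [interior_Ici]
    intro x hx y hy hxy
    rw [Set.mem_Ioi] at hx hy
    rw [(hd x hx).deriv, (hd y hy).deriv]
    have hsx : 0 < Real.sqrt x := Real.sqrt_pos.2 hx
    have hsy : 0 < Real.sqrt y := Real.sqrt_pos.2 hy
    have h := MW_sinh_div_mono hsx (Real.sqrt_le_sqrt hxy)
    have e1 : Real.sinh (Real.sqrt x) * (1 / (2 * Real.sqrt x)) = (Real.sinh (Real.sqrt x) / Real.sqrt x) / 2 := by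
      field_simp
    have e2 : Real.sinh (Real.sqrt y) * (1 / (2 * Real.sqrt y)) = (Real.sinh (Real.sqrt y) / Real.sqrt y) / 2 := by
      field_simp
    rw [e1, e2]
    linarith

lemma MW_cosh_sqrt_le {p q c : ℝ} (hp : 0 < p) (hq : 0 < q) (hc : |c| ≤ p * q) :
    Real.cosh (Real.sqrt (p^2 + q^2 + 2*c)) * (p*q) ≤
      Real.cosh p * Real.cosh q * (p*q) + Real.sinh p * Real.sinh q * c := by
  have hpq : 0 < p * q := mul_pos hp hq
  obtain ⟨hc1, hc2⟩ := abs_le.1 hc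
  set A : ℝ := (p*q - c) / (2*(p*q)) with hA
  set B : ℝ := (p*q + c) / (2*(p*q)) with hB
  have hA0 : 0 ≤ A := by
    apply div_nonneg (by linarith) (by linarith)
  have hB0 : 0 ≤ B := by
    apply div_nonneg (by linarith) (by linarith)
  have hAB : A + B = 1 := by rw [hA, hB]; field_simp; ring
  have hx1 : ((p - q)^2 : ℝ) ∈ Set.Ici (0:ℝ) := Set.mem_Ici.2 (sq_nonneg _)
  have hx2 : ((p + q)^2 : ℝ) ∈ Set.Ici (0:ℝ) := Set.mem_Ici.2 (sq_nonneg _)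
  have key := MW_convexOn_cosh_sqrt.2 hx1 hx2 hA0 hB0 hAB
  have hcomb : A • ((p - q)^2) + B • ((p + q)^2) = p^2 + q^2 + 2*c := by
    rw [hA, hB, smul_eq_mul, smul_eq_mul]; field_simp; ring
  rw [hcomb] at key
  simp only [smul_eq_mul] at key
  have hs1 : Real.sqrt ((p - q)^2) = |p - q| := Real.sqrt_sq_eq_abs _
  have hs2 : Real.sqrt ((p + q)^2) = p + q := by
    rw [Real.sqrt_sq_eq_abs, abs_of_pos (by linarith)]
  rw [hs1, hs2, Real.cosh_abs, Real.cosh_sub, Real.cosh_add] at key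
  have key2 : Real.cosh (Real.sqrt (p^2+q^2+2*c)) * (p*q) ≤
      (A * (Real.cosh p * Real.cosh q - Real.sinh p * Real.sinh q)
        + B * (Real.cosh p * Real.cosh q + Real.sinh p * Real.sinh q)) * (p*q) :=
    mul_le_mul_of_nonneg_right key hpq.le
  refine key2.trans (le_of_eq ?_)
  rw [hA, hB]; field_simp; ring


lemma MW_exp_delta_le {δ z : ℝ} (hδ0 : 0 < δ) (hδ1 : δ ≤ 1) (hz0 : 0 ≤ z) (hz1 : z ≤ 1) :
    Real.exp (δ*z) ≤ 1 + δ*(1+δ)*z := by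
  have h1 : |δ*z| ≤ 1 := by
    rw [abs_of_nonneg (by positivity)]; nlinarith
  have h2 := Real.exp_bound h1 (by norm_num : 0 < 2)
  have h3 : ∑ i ∈ Finset.range 2, (δ*z)^i / (Nat.factorial i) = 1 + δ*z := by
    simp [Finset.sum_range_succ]
  rw [h3] at h2
  have h4 : Real.exp (δ*z) - (1+δ*z) ≤ |δ*z|^2 * (3/4) := by
    refine (le_abs_self _).trans (h2.trans (le_of_eq ?_))
    norm_num [Nat.factorial]
  rw [abs_of_nonneg (by positivity)] at h4
  nlinarith [sq_nonneg (δ*z), mul_pos hδ0 hδ0]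

namespace SOC
variable {d : ℕ}

lemma MW_dotp_eq (v w : Vec d) : dotp v w = v.1 * w.1 + inner ℝ v.2 w.2 := by
  rw [dotp, PiLp.inner_apply]; simp [RCLike.inner_apply, mul_comm]

lemma MW_dotp_comm (v w : Vec d) : dotp v w = dotp w v := by
  rw [MW_dotp_eq, MW_dotp_eq, real_inner_comm]; ring

lemma MW_dotp_nonneg {v w : Vec d} (hv : inCone v) (hw : inCone w) : 0 ≤ dotp v w := by
  rw [MW_dotp_eq]
  have h := abs_real_inner_le_norm v.2 w.2
  have h2 := abs_le.1 h
  have := norm_nonneg v.2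
  have := norm_nonneg w.2
  rw [inCone] at hv hw
  nlinarith [h2.1]

lemma MW_dotp_le_lamP {v w : Vec d} (hw : inCone w) : dotp v w ≤ lamP v * w.1 := by
  rw [MW_dotp_eq, lamP]
  have h := (abs_le.1 (abs_real_inner_le_norm v.2 w.2)).2
  have h1 := norm_nonneg v.2
  have h2 := norm_nonneg w.2
  rw [inCone] at hw
  nlinarith

lemma MW_dotp_sub_right (w u v : Vec d) : dotp w (v - u) = dotp w v - dotp w u := by
  rw [MW_dotp_eq, MW_dotp_eq, MW_dotp_eq]
  have : (v - u).1 = v.1 - u.1 := rfl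
  have h2 : (v - u).2 = v.2 - u.2 := rfl
  rw [this, h2, inner_sub_right]; ring

lemma MW_dotp_mono {w u v : Vec d} (hw : inCone w) (h : cleq u v) : dotp w u ≤ dotp w v := by
  have := MW_dotp_nonneg hw h
  have heq := MW_dotp_sub_right w u v
  linarith

lemma MW_dotp_add_right (w u v : Vec d) : dotp w (u + v) = dotp w u + dotp w v := by
  rw [MW_dotp_eq, MW_dotp_eq, MW_dotp_eq]
  have : (u + v).1 = u.1 + v.1 := rfl
  have h2 : (u + v).2 = u.2 + v.2 := rfl
  rw [this, h2, inner_add_right]; ring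

lemma MW_dotp_smul_right (w : Vec d) (c : ℝ) (v : Vec d) : dotp w (c • v) = c * dotp w v := by
  rw [MW_dotp_eq, MW_dotp_eq]
  have : (c • v).1 = c * v.1 := rfl
  have h2 : (c • v).2 = c • v.2 := rfl
  rw [this, h2, real_inner_smul_right]; ring

lemma MW_dotp_smul_left (w : Vec d) (c : ℝ) (v : Vec d) : dotp (c • v) w = c * dotp v w := by
  rw [MW_dotp_comm, MW_dotp_smul_right, MW_dotp_comm]

lemma MW_dotp_idel (w : Vec d) : dotp w (idel d) = w.1 := by
  rw [MW_dotp_eq, idel]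
  simp

lemma MW_jtr_jmul (v w : Vec d) : jtr (jmul v w) = 2 * dotp v w := rfl

lemma MW_jtr_jexp (v : Vec d) : jtr (jexp v) = Real.exp (lamP v) + Real.exp (lamM v) := by
  rw [jtr, jexp]; ring

lemma MW_jexp_cosh (v : Vec d) :
    Real.exp (lamP v) + Real.exp (lamM v) = Real.exp v.1 * (2 * Real.cosh ‖v.2‖) := by
  rw [lamP, lamM, Real.cosh_eq, Real.exp_add, Real.exp_sub, Real.exp_neg]
  field_simp

lemma MW_jexp_sinh (v : Vec d) :
    Real.exp (lamP v) - Real.exp (lamM v) = Real.exp v.1 * (2 * Real.sinh ‖v.2‖) := by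
  rw [lamP, lamM, Real.sinh_eq, Real.exp_add, Real.exp_sub, Real.exp_neg]
  field_simp

lemma MW_jexp_inCone (v : Vec d) : inCone (jexp v) := by
  rw [inCone, jexp]
  have h1 : Real.exp (lamM v) ≤ Real.exp (lamP v) := by
    apply Real.exp_le_exp.2
    rw [lamP, lamM]
    have := norm_nonneg v.2
    linarith
  by_cases hp : ‖v.2‖ = 0
  · simp only [hp]
    simp [norm_smul]
    positivity
  · have hp' : 0 < ‖v.2‖ := lt_of_le_of_ne (norm_nonneg _) (Ne.symm hp)
    rw [norm_smul]
    rw [Real.norm_eq_abs, abs_div, abs_of_nonneg (by linarith), abs_of_pos (by positivity)]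
    have hgoal : (Real.exp (lamP v) - Real.exp (lamM v)) / (2 * ‖v.2‖) * ‖v.2‖
        = (Real.exp (lamP v) - Real.exp (lamM v)) / 2 := by
      field_simp
    rw [hgoal]
    show (Real.exp (lamP v) - Real.exp (lamM v)) / 2 ≤ (Real.exp (lamP v) + Real.exp (lamM v)) / 2
    have := (Real.exp_pos (lamM v)).le
    linarith

lemma MW_jexp_pos (v : Vec d) : 0 < jtr (jexp v) := by
  rw [MW_jtr_jexp]
  positivity

end SOC

namespace SOC
variable {d : ℕ}

lemma MW_golden_thompson (a b : Vec d) :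
    jtr (jexp (a + b)) ≤ jtr (jmul (jexp a) (jexp b)) := by
  have hab1 : (a + b).1 = a.1 + b.1 := rfl
  have hab2 : (a + b).2 = a.2 + b.2 := rfl
  rw [MW_jtr_jmul, MW_jtr_jexp, MW_jexp_cosh, hab1, hab2]
  rw [MW_dotp_eq]
  have hfst : (jexp a).1 * (jexp b).1
      = (Real.exp a.1 * Real.cosh ‖a.2‖) * (Real.exp b.1 * Real.cosh ‖b.2‖) := by
    show ((Real.exp (lamP a) + Real.exp (lamM a))/2) * ((Real.exp (lamP b) + Real.exp (lamM b))/2) = _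
    rw [MW_jexp_cosh, MW_jexp_cosh]; ring
  have hsnd : inner ℝ (jexp a).2 (jexp b).2 =
      ((Real.exp a.1 * (2 * Real.sinh ‖a.2‖)) / (2 * ‖a.2‖)) *
      ((Real.exp b.1 * (2 * Real.sinh ‖b.2‖)) / (2 * ‖b.2‖)) * inner ℝ a.2 b.2 := by
    show inner ℝ (((Real.exp (lamP a) - Real.exp (lamM a)) / (2 * ‖a.2‖)) • a.2)
      (((Real.exp (lamP b) - Real.exp (lamM b)) / (2 * ‖b.2‖)) • b.2) = _
    rw [real_inner_smul_left, real_inner_smul_right, MW_jexp_sinh, MW_jexp_sinh]; ring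
  rw [hfst, hsnd]
  by_cases hp : ‖a.2‖ = 0
  · have ha2 : a.2 = 0 := norm_eq_zero.1 hp
    simp [ha2, hp, Real.exp_add]
    ring_nf
    exact le_of_eq rfl
  by_cases hq : ‖b.2‖ = 0
  · have hb2 : b.2 = 0 := norm_eq_zero.1 hq
    simp [hb2, hq, Real.exp_add]
    ring_nf
    exact le_of_eq rfl
  · have hp' : 0 < ‖a.2‖ := lt_of_le_of_ne (norm_nonneg _) (Ne.symm hp)
    have hq' : 0 < ‖b.2‖ := lt_of_le_of_ne (norm_nonneg _) (Ne.symm hq)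
    set p := ‖a.2‖
    set q := ‖b.2‖
    set c : ℝ := inner ℝ a.2 b.2 with hc
    have hs : ‖a.2 + b.2‖ = Real.sqrt (p^2 + q^2 + 2*c) := by
      rw [← Real.sqrt_sq (norm_nonneg (a.2 + b.2)), norm_add_sq_real]
      congr 1; simp only [p, q, c]; ring
    have hcle : |c| ≤ p * q := abs_real_inner_le_norm a.2 b.2
    have key := MW_cosh_sqrt_le hp' hq' hcle
    rw [hs]
    have hE : 0 < Real.exp (a.1 + b.1) := Real.exp_pos _
    have hpq : 0 < p * q := mul_pos hp' hq'
    rw [Real.exp_add]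
    have expand : Real.exp a.1 * Real.exp b.1 * (2 * Real.cosh (Real.sqrt (p^2+q^2+2*c))) * (p*q)
        ≤ Real.exp a.1 * Real.exp b.1 *
          (2 * (Real.cosh p * Real.cosh q * (p*q) + Real.sinh p * Real.sinh q * c)) := by
      have h2 := mul_le_mul_of_nonneg_left key (by positivity :
        (0:ℝ) ≤ Real.exp a.1 * Real.exp b.1 * 2)
      calc Real.exp a.1 * Real.exp b.1 * (2 * Real.cosh (Real.sqrt (p^2+q^2+2*c))) * (p*q)
          = Real.exp a.1 * Real.exp b.1 * 2 * (Real.cosh (Real.sqrt (p^2+q^2+2*c)) * (p*q)) := by ring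
        _ ≤ Real.exp a.1 * Real.exp b.1 * 2 *
            (Real.cosh p * Real.cosh q * (p*q) + Real.sinh p * Real.sinh q * c) := h2
        _ = _ := by ring
    have target : 2 * (Real.exp a.1 * Real.cosh p * (Real.exp b.1 * Real.cosh q) +
        Real.exp a.1 * (2 * Real.sinh p) / (2*p) * (Real.exp b.1 * (2 * Real.sinh q) / (2*q)) * c) * (p*q)
        = Real.exp a.1 * Real.exp b.1 *
          (2 * (Real.cosh p * Real.cosh q * (p*q) + Real.sinh p * Real.sinh q * c)) := by
      field_simp
    have final := expand.trans_eq target.symm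
    have := (mul_le_mul_iff_of_pos_right hpq).1 final
    linarith

end SOC

namespace SOC
variable {d : ℕ}

lemma MW_scalar_cone {δ u p : ℝ} (hδ0 : 0 < δ) (hδ1 : δ ≤ 1) (hp : 0 ≤ p)
    (h1 : p ≤ u) (h2 : p ≤ 1 - u) :
    |δ*(1+δ)*p - (Real.exp (δ*(u+p)) - Real.exp (δ*(u-p)))/2|
      ≤ 1 + δ*(1+δ)*u - (Real.exp (δ*(u+p)) + Real.exp (δ*(u-p)))/2 := by
  have hgx : Real.exp (δ*(u+p)) ≤ 1 + δ*(1+δ)*(u+p) :=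
    MW_exp_delta_le hδ0 hδ1 (by linarith) (by linarith)
  have hgy : Real.exp (δ*(u-p)) ≤ 1 + δ*(1+δ)*(u-p) :=
    MW_exp_delta_le hδ0 hδ1 (by linarith) (by linarith)
  rw [abs_le]
  constructor <;> nlinarith [hgx, hgy]

lemma MW_jexp_le {δ : ℝ} (hδ0 : 0 < δ) (hδ1 : δ ≤ 1) {m : Vec d} (hm0 : inCone m)
    (hme : inCone (idel d - m)) :
    cleq (jexp (δ • m)) (idel d + (δ * (1 + δ)) • m) := by
  have hm1 : (idel d - m).1 = 1 - m.1 := rfl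
  have hm2 : (idel d - m).2 = -m.2 := by
    show (0 : EuclideanSpace ℝ (Fin d)) - m.2 = -m.2
    simp
  rw [inCone, hm1, hm2, norm_neg] at hme
  rw [inCone] at hm0
  have hp0 : (0:ℝ) ≤ ‖m.2‖ := norm_nonneg _
  have hme' : ‖m.2‖ ≤ 1 - m.1 := hme
  have hnsm : ‖(δ • m).2‖ = δ * ‖m.2‖ := by
    show ‖δ • m.2‖ = _
    rw [norm_smul, Real.norm_eq_abs, abs_of_pos hδ0]
  have hlamP : lamP (δ • m) = δ * (m.1 + ‖m.2‖) := by
    rw [lamP, hnsm]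
    show δ * m.1 + δ * ‖m.2‖ = _
    ring
  have hlamM : lamM (δ • m) = δ * (m.1 - ‖m.2‖) := by
    rw [lamM, hnsm]
    show δ * m.1 - δ * ‖m.2‖ = _
    ring
  rw [cleq, inCone]
  have hfst : (idel d + (δ * (1 + δ)) • m - jexp (δ • m)).1
      = 1 + δ * (1 + δ) * m.1
        - (Real.exp (δ * (m.1 + ‖m.2‖)) + Real.exp (δ * (m.1 - ‖m.2‖))) / 2 := by
    show 1 + δ * (1 + δ) * m.1 - (Real.exp (lamP (δ • m)) + Real.exp (lamM (δ • m))) / 2 = _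
    rw [hlamP, hlamM]
  have hsnd : (idel d + (δ * (1 + δ)) • m - jexp (δ • m)).2
      = (δ * (1 + δ)) • m.2
        - ((Real.exp (δ * (m.1 + ‖m.2‖)) - Real.exp (δ * (m.1 - ‖m.2‖)))
            / (2 * (δ * ‖m.2‖))) • (δ • m.2) := by
    show (0 : EuclideanSpace ℝ (Fin d)) + (δ * (1 + δ)) • m.2
        - ((Real.exp (lamP (δ • m)) - Real.exp (lamM (δ • m))) / (2 * ‖(δ • m).2‖)) • (δ • m.2) = _
    rw [hlamP, hlamM, hnsm, zero_add]
  rw [hfst, hsnd]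
  by_cases hpz : ‖m.2‖ = 0
  · have hm2z : m.2 = 0 := norm_eq_zero.1 hpz
    have hkey := MW_exp_delta_le hδ0 hδ1 (show 0 ≤ m.1 by linarith) (show m.1 ≤ 1 by linarith)
    rw [hm2z]
    simp only [smul_zero, sub_zero, norm_zero, hpz, add_zero]
    linarith [hkey]
  · have hp' : 0 < ‖m.2‖ := lt_of_le_of_ne hp0 (Ne.symm hpz)
    have hcoef : ((Real.exp (δ * (m.1 + ‖m.2‖)) - Real.exp (δ * (m.1 - ‖m.2‖)))
            / (2 * (δ * ‖m.2‖))) • (δ • m.2)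
        = ((Real.exp (δ * (m.1 + ‖m.2‖)) - Real.exp (δ * (m.1 - ‖m.2‖))) / (2 * ‖m.2‖)) • m.2 := by
      rw [smul_smul]
      congr 1
      field_simp
    rw [hcoef, ← sub_smul, norm_smul, Real.norm_eq_abs]
    have habs : |δ * (1 + δ) - (Real.exp (δ * (m.1 + ‖m.2‖)) - Real.exp (δ * (m.1 - ‖m.2‖)))
          / (2 * ‖m.2‖)| * ‖m.2‖
        = |δ * (1 + δ) * ‖m.2‖
            - (Real.exp (δ * (m.1 + ‖m.2‖)) - Real.exp (δ * (m.1 - ‖m.2‖))) / 2| := by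
      have step1 : |δ * (1 + δ) - (Real.exp (δ * (m.1 + ‖m.2‖)) - Real.exp (δ * (m.1 - ‖m.2‖)))
          / (2 * ‖m.2‖)| * ‖m.2‖
        = |(δ * (1 + δ) - (Real.exp (δ * (m.1 + ‖m.2‖)) - Real.exp (δ * (m.1 - ‖m.2‖)))
          / (2 * ‖m.2‖)) * ‖m.2‖| := by
        rw [abs_mul, abs_of_pos hp']
      rw [step1]
      congr 1
      field_simp
    rw [habs]
    exact MW_scalar_cone hδ0 hδ1 hp0 hm0 hme'

end SOC

namespace SOC
variable {d : ℕ}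

lemma MW_dotp_zero_left (w : Vec d) : dotp 0 w = 0 := by
  rw [MW_dotp_eq]
  have h1 : (0 : Vec d).1 = 0 := rfl
  have h2 : (0 : Vec d).2 = 0 := rfl
  rw [h1, h2, inner_zero_left]
  ring

lemma MW_dotp_add_left (u v w : Vec d) : dotp (u + v) w = dotp u w + dotp v w := by
  rw [MW_dotp_comm, MW_dotp_add_right, MW_dotp_comm u w, MW_dotp_comm v w]

lemma MW_dotp_sum_left {ι : Type*} (s : Finset ι) (f : ι → Vec d) (w : Vec d) :
    dotp (∑ t ∈ s, f t) w = ∑ t ∈ s, dotp (f t) w := by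
  classical
  induction s using Finset.cons_induction with
  | empty => simpa using MW_dotp_zero_left w
  | cons a s ha ih =>
    rw [Finset.sum_cons, Finset.sum_cons, MW_dotp_add_left, ih]

lemma MW_jtr_jexp_zero : jtr (jexp (0 : Vec d)) = 2 := by
  rw [MW_jtr_jexp]
  have h1 : lamP (0 : Vec d) = 0 := by
    rw [lamP]
    show (0:ℝ) + ‖(0 : EuclideanSpace ℝ (Fin d))‖ = 0
    simp
  have h2 : lamM (0 : Vec d) = 0 := by
    rw [lamM]
    show (0:ℝ) - ‖(0 : EuclideanSpace ℝ (Fin d))‖ = 0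
    simp
  rw [h1, h2, Real.exp_zero]
  norm_num

variable {r : ℕ} {n : Fin r → ℕ}

lemma MW_mtr_mjexp_pos (hr : 0 < r) (v : MVec n) : 0 < mtr (mjexp v) := by
  rw [mtr]
  have : Nonempty (Fin r) := ⟨⟨0, hr⟩⟩
  apply Finset.sum_pos (fun k _ => MW_jexp_pos (v k)) Finset.univ_nonempty

lemma MW_step (hr : 0 < r) {δ : ℝ} (hδ0 : 0 < δ) (hδ1 : δ ≤ 1) (A m : MVec n)
    (hm0 : minCone m) (hme : minCone (mid n - m)) :
    mtr (mjexp (A + δ • m)) ≤ mtr (mjexp A) *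
      Real.exp (δ * (1 + δ) * mtr (mjmul m ((mtr (mjexp A))⁻¹ • mjexp A))) := by
  have hZ : 0 < mtr (mjexp A) := MW_mtr_mjexp_pos hr A
  have h1 : mtr (mjexp (A + δ • m)) ≤ ∑ k, 2 * dotp (jexp (A k)) (jexp (δ • m k)) := by
    rw [mtr]
    apply Finset.sum_le_sum
    intro k _
    have heq : (A + δ • m) k = A k + δ • m k := rfl
    have := MW_golden_thompson (A k) (δ • m k)
    rw [MW_jtr_jmul] at this
    rw [mjexp]
    rw [heq]
    exact this
  have h2 : ∀ k, 2 * dotp (jexp (A k)) (jexp (δ • m k))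
      ≤ 2 * (jexp (A k)).1 + (δ * (1 + δ)) * (2 * dotp (m k) (jexp (A k))) := by
    intro k
    have hme' : inCone (idel (n k) - m k) := hme k
    have hle := MW_jexp_le hδ0 hδ1 (hm0 k) hme'
    have hmono := MW_dotp_mono (MW_jexp_inCone (A k)) hle
    have hexpand : dotp (jexp (A k)) (idel (n k) + (δ * (1 + δ)) • m k)
        = (jexp (A k)).1 + (δ * (1 + δ)) * dotp (jexp (A k)) (m k) := by
      rw [MW_dotp_add_right, MW_dotp_idel, MW_dotp_smul_right]
    rw [hexpand] at hmono
    rw [MW_dotp_comm (m k) (jexp (A k))]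
    linarith
  have h3 : mtr (mjexp (A + δ • m)) ≤ mtr (mjexp A)
      + (δ * (1 + δ)) * ∑ k, 2 * dotp (m k) (jexp (A k)) := by
    calc mtr (mjexp (A + δ • m)) ≤ ∑ k, 2 * dotp (jexp (A k)) (jexp (δ • m k)) := h1
      _ ≤ ∑ k, (2 * (jexp (A k)).1 + (δ * (1 + δ)) * (2 * dotp (m k) (jexp (A k)))) :=
        Finset.sum_le_sum (fun k _ => h2 k)
      _ = mtr (mjexp A) + (δ * (1 + δ)) * ∑ k, 2 * dotp (m k) (jexp (A k)) := by
        rw [Finset.sum_add_distrib, Finset.mul_sum, mtr]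
        congr 1
  have h4 : mtr (mjmul m ((mtr (mjexp A))⁻¹ • mjexp A))
      = (mtr (mjexp A))⁻¹ * ∑ k, 2 * dotp (m k) (jexp (A k)) := by
    rw [mtr, Finset.mul_sum]
    apply Finset.sum_congr rfl
    intro k _
    have heq : (mjmul m ((mtr (mjexp A))⁻¹ • mjexp A)) k
        = jmul (m k) ((mtr (mjexp A))⁻¹ • jexp (A k)) := rfl
    rw [heq, MW_jtr_jmul, MW_dotp_smul_right]
    ring
  have h5 : ∑ k, 2 * dotp (m k) (jexp (A k))
      = mtr (mjexp A) * mtr (mjmul m ((mtr (mjexp A))⁻¹ • mjexp A)) := by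
    rw [h4, ← mul_assoc, mul_inv_cancel₀ (ne_of_gt hZ), one_mul]
  rw [h5] at h3
  have h6 := Real.add_one_le_exp (δ * (1 + δ) * mtr (mjmul m ((mtr (mjexp A))⁻¹ • mjexp A)))
  calc mtr (mjexp (A + δ • m))
      ≤ mtr (mjexp A) + δ * (1 + δ) * (mtr (mjexp A) * mtr (mjmul m ((mtr (mjexp A))⁻¹ • mjexp A))) := h3
    _ = mtr (mjexp A) * (δ * (1 + δ) * mtr (mjmul m ((mtr (mjexp A))⁻¹ • mjexp A)) + 1) := by ring
    _ ≤ mtr (mjexp A) * Real.exp (δ * (1 + δ) * mtr (mjmul m ((mtr (mjexp A))⁻¹ • mjexp A))) :=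
        mul_le_mul_of_nonneg_left h6 hZ.le

lemma MW_mtr_mjexp_zero : mtr (mjexp (0 : MVec n)) = 2 * r := by
  rw [mtr]
  have : ∀ k : Fin r, jtr (mjexp (0 : MVec n) k) = 2 := by
    intro k
    have heq : mjexp (0 : MVec n) k = jexp (0 : Vec (n k)) := rfl
    rw [heq, MW_jtr_jexp_zero]
  rw [Finset.sum_congr rfl (fun k _ => this k)]
  simp [Finset.card_univ]
  ring

end SOC

/-- Multiplicative weights regret bound over a product of `r`
second-order cones. -/
theorem mw_regret_bound {r : ℕ} (hr : 0 < r) {n : Fin r → ℕ} (T : ℕ) (δ : ℝ)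
    (hδ0 : 0 < δ) (hδ1 : δ ≤ 1) (M : ℕ → SOC.MVec n)
    (hM0 : ∀ t < T, SOC.minCone (M t))
    (hMe : ∀ t < T, SOC.minCone (SOC.mid n - M t))
    (Q : SOC.MVec n) (hQ : SOC.minCone Q) (hQtr : SOC.mtr Q = 1)
    (P : ℕ → SOC.MVec n)
    (hP : ∀ t, P t = (SOC.mtr (SOC.mjexp (δ • ∑ τ ∈ Finset.range t, M τ)))⁻¹ •
      SOC.mjexp (δ • ∑ τ ∈ Finset.range t, M τ)) :
    (1 + δ) * ∑ t ∈ Finset.range T, SOC.mtr (SOC.mjmul (M t) (P t)) ≥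
      (∑ t ∈ Finset.range T, SOC.mtr (SOC.mjmul (M t) Q)) - Real.log (2 * r) / δ := by
  classical
  have hZpos : ∀ t : ℕ, 0 < SOC.mtr (SOC.mjexp (δ • ∑ τ ∈ Finset.range t, M τ)) :=
    fun t => SOC.MW_mtr_mjexp_pos hr _
  have hstep : ∀ t, t < T →
      SOC.mtr (SOC.mjexp (δ • ∑ τ ∈ Finset.range (t+1), M τ)) ≤
        SOC.mtr (SOC.mjexp (δ • ∑ τ ∈ Finset.range t, M τ)) *
          Real.exp (δ * (1 + δ) * SOC.mtr (SOC.mjmul (M t) (P t))) := by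
    intro t ht
    rw [Finset.sum_range_succ, smul_add, hP t]
    exact SOC.MW_step hr hδ0 hδ1 _ (M t) (hM0 t ht) (hMe t ht)
  have hiter : ∀ t, t ≤ T →
      SOC.mtr (SOC.mjexp (δ • ∑ τ ∈ Finset.range t, M τ)) ≤
        (2 * r) * Real.exp (δ * (1 + δ) *
          ∑ τ ∈ Finset.range t, SOC.mtr (SOC.mjmul (M τ) (P τ))) := by
    intro t
    induction t with
    | zero =>
      intro _
      simp only [Finset.range_zero, Finset.sum_empty, smul_zero]
      rw [SOC.MW_mtr_mjexp_zero, mul_zero, Real.exp_zero, mul_one]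
    | succ t ih =>
      intro ht
      have ht' : t ≤ T := Nat.le_of_succ_le ht
      have h1 := hstep t (Nat.lt_of_succ_le ht)
      have h2 := ih ht'
      calc SOC.mtr (SOC.mjexp (δ • ∑ τ ∈ Finset.range (t+1), M τ))
          ≤ SOC.mtr (SOC.mjexp (δ • ∑ τ ∈ Finset.range t, M τ)) *
              Real.exp (δ * (1 + δ) * SOC.mtr (SOC.mjmul (M t) (P t))) := h1
        _ ≤ ((2*r) * Real.exp (δ*(1+δ) *
              ∑ τ ∈ Finset.range t, SOC.mtr (SOC.mjmul (M τ) (P τ)))) *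
              Real.exp (δ * (1 + δ) * SOC.mtr (SOC.mjmul (M t) (P t))) :=
            mul_le_mul_of_nonneg_right h2 (Real.exp_pos _).le
        _ = (2*r) * Real.exp (δ*(1+δ) *
              ∑ τ ∈ Finset.range (t+1), SOC.mtr (SOC.mjmul (M τ) (P τ))) := by
            rw [Finset.sum_range_succ, mul_add (δ * (1 + δ)), Real.exp_add, ← mul_assoc]
  have hne : (Finset.univ : Finset (Fin r)).Nonempty := ⟨⟨0, hr⟩, Finset.mem_univ _⟩
  obtain ⟨k0, -, hk0⟩ := Finset.exists_max_image Finset.univ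
    (fun k => SOC.lamP ((δ • ∑ τ ∈ Finset.range T, M τ) k)) hne
  have hexpL : Real.exp (SOC.lamP ((δ • ∑ τ ∈ Finset.range T, M τ) k0))
      ≤ SOC.mtr (SOC.mjexp (δ • ∑ τ ∈ Finset.range T, M τ)) := by
    have hterm : Real.exp (SOC.lamP ((δ • ∑ τ ∈ Finset.range T, M τ) k0))
        ≤ SOC.jtr (SOC.mjexp (δ • ∑ τ ∈ Finset.range T, M τ) k0) := by
      have heq : SOC.mjexp (δ • ∑ τ ∈ Finset.range T, M τ) k0
          = SOC.jexp ((δ • ∑ τ ∈ Finset.range T, M τ) k0) := rfl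
      rw [heq, SOC.MW_jtr_jexp]
      have := (Real.exp_pos (SOC.lamM ((δ • ∑ τ ∈ Finset.range T, M τ) k0))).le
      linarith
    refine hterm.trans ?_
    rw [SOC.mtr]
    exact Finset.single_le_sum
      (f := fun k => SOC.jtr (SOC.mjexp (δ • ∑ τ ∈ Finset.range T, M τ) k))
      (fun k _ => (SOC.MW_jexp_pos _).le) (Finset.mem_univ k0)
  have hQbound : δ * ∑ t ∈ Finset.range T, SOC.mtr (SOC.mjmul (M t) Q)
      ≤ SOC.lamP ((δ • ∑ τ ∈ Finset.range T, M τ) k0) := by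
    have heq : δ * ∑ t ∈ Finset.range T, SOC.mtr (SOC.mjmul (M t) Q)
        = ∑ k, 2 * SOC.dotp ((δ • ∑ τ ∈ Finset.range T, M τ) k) (Q k) := by
      have hform : ∀ k : Fin r, 2 * SOC.dotp ((δ • ∑ τ ∈ Finset.range T, M τ) k) (Q k)
          = δ * ∑ t ∈ Finset.range T, 2 * SOC.dotp (M t k) (Q k) := by
        intro k
        have h1 : (δ • ∑ τ ∈ Finset.range T, M τ) k
            = δ • (∑ τ ∈ Finset.range T, M τ) k := rfl
        have h2 : (∑ τ ∈ Finset.range T, M τ) k = ∑ τ ∈ Finset.range T, M τ k := by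
          rw [Finset.sum_apply]
        rw [h1, h2, SOC.MW_dotp_smul_left, SOC.MW_dotp_sum_left]
        simp only [Finset.mul_sum]
        exact Finset.sum_congr rfl (fun t _ => by ring)
      rw [Finset.sum_congr rfl (fun k _ => hform k), ← Finset.mul_sum]
      congr 1
      rw [Finset.sum_comm]
      apply Finset.sum_congr rfl
      intro t _
      rw [SOC.mtr]
      exact Finset.sum_congr rfl (fun k _ => SOC.MW_jtr_jmul (M t k) (Q k))
    rw [heq]
    have hper : ∀ k : Fin r, 2 * SOC.dotp ((δ • ∑ τ ∈ Finset.range T, M τ) k) (Q k)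
        ≤ SOC.lamP ((δ • ∑ τ ∈ Finset.range T, M τ) k0) * SOC.jtr (Q k) := by
      intro k
      have hQk := hQ k
      have h1 := SOC.MW_dotp_le_lamP (v := (δ • ∑ τ ∈ Finset.range T, M τ) k) hQk
      have h2 := hk0 k (Finset.mem_univ k)
      have hQ1 : 0 ≤ (Q k).1 := le_trans (norm_nonneg _) hQk
      rw [SOC.jtr]
      nlinarith
    calc ∑ k, 2 * SOC.dotp ((δ • ∑ τ ∈ Finset.range T, M τ) k) (Q k)
        ≤ ∑ k, SOC.lamP ((δ • ∑ τ ∈ Finset.range T, M τ) k0) * SOC.jtr (Q k) :=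
          Finset.sum_le_sum (fun k _ => hper k)
      _ = SOC.lamP ((δ • ∑ τ ∈ Finset.range T, M τ) k0) * SOC.mtr Q := by
          rw [← Finset.mul_sum, SOC.mtr]
      _ = _ := by rw [hQtr, mul_one]
  have h2r : (0:ℝ) < 2 * r := by
    have : (0:ℝ) < r := Nat.cast_pos.2 hr
    linarith
  have hlog : SOC.lamP ((δ • ∑ τ ∈ Finset.range T, M τ) k0)
      ≤ Real.log (2 * r) + δ * (1 + δ) *
        ∑ t ∈ Finset.range T, SOC.mtr (SOC.mjmul (M t) (P t)) := by
    have h1 : Real.exp (SOC.lamP ((δ • ∑ τ ∈ Finset.range T, M τ) k0))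
        ≤ (2*r) * Real.exp (δ*(1+δ) *
          ∑ τ ∈ Finset.range T, SOC.mtr (SOC.mjmul (M τ) (P τ))) :=
      hexpL.trans (hiter T le_rfl)
    have h2 := Real.log_le_log (Real.exp_pos _) h1
    rw [Real.log_exp, Real.log_mul (ne_of_gt h2r) (Real.exp_ne_zero _), Real.log_exp] at h2
    exact h2
  have hcomb : δ * ∑ t ∈ Finset.range T, SOC.mtr (SOC.mjmul (M t) Q)
      ≤ Real.log (2 * r) + δ * (1 + δ) *
        ∑ t ∈ Finset.range T, SOC.mtr (SOC.mjmul (M t) (P t)) := hQbound.trans hlog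
  have hc : Real.log (2 * (r:ℝ)) = (Real.log (2 * (r:ℝ)) / δ) * δ := by
    field_simp
  rw [ge_iff_le, sub_le_iff_le_add]
  nlinarith [hcomb, hδ0, hc]
end
end

section
/- Potential function upper bound: with M^{(t)}, P^{(t)}, Φ^{(t)} = Tr(e^{δΣ_{τ<t}M^{(τ)}}) as in the multiplicative weights setup over r second-order cones (0 ⪯ M^{(t)} ⪯ e, 0 < δ ≤ 1), one has Φ^{(T)} ≤ 2r · exp((e^δ − 1) Σ_{τ<T} Tr(P^{(τ)} ∘ M^{(τ)})). -/
open Real Finset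

noncomputable section

namespace SOCAux
open SOC Real Nat

lemma hasSum_cosh_sqrt {s : ℝ} (hs : 0 ≤ s) :
    HasSum (fun n => s ^ n / ((2*n)! : ℝ)) (Real.cosh (Real.sqrt s)) := by
  have h := Real.hasSum_cosh (Real.sqrt s)
  convert h using 2 with n
  rw [pow_mul, Real.sq_sqrt hs]

lemma cosh_sqrt_convex {A B l m : ℝ} (hA : 0 ≤ A) (hB : 0 ≤ B) (hl : 0 ≤ l)
    (hm : 0 ≤ m) (hlm : l + m = 1) :
    Real.cosh (Real.sqrt (l*A + m*B)) ≤ l * Real.cosh (Real.sqrt A) + m * Real.cosh (Real.sqrt B) := by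
  have h1 := hasSum_cosh_sqrt (by positivity : (0:ℝ) ≤ l*A+m*B)
  have h2 := ((hasSum_cosh_sqrt hA).mul_left l).add ((hasSum_cosh_sqrt hB).mul_left m)
  refine hasSum_le (fun n => ?_) h1 h2
  have hcv := (convexOn_pow n).2 (Set.mem_Ici.2 hA) (Set.mem_Ici.2 hB) hl hm hlm
  simp only [smul_eq_mul] at hcv
  have hfac : (0:ℝ) < ((2*n)! : ℝ) := by positivity
  have he : l * (A ^ n / ((2*n)! : ℝ)) + m * (B ^ n / ((2*n)! : ℝ))
      = (l * A^n + m * B^n) / ((2*n)! : ℝ) := by ring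
  rw [he]
  gcongr

lemma cosh_key {x y c : ℝ} (hx : 0 ≤ x) (hy : 0 ≤ y) (hc : |c| ≤ 1) :
    Real.cosh (Real.sqrt (x^2 + y^2 + 2*(x*y*c))) ≤
      Real.cosh x * Real.cosh y + Real.sinh x * Real.sinh y * c := by
  obtain ⟨hc1, hc2⟩ := abs_le.mp hc
  have hl : (0:ℝ) ≤ (1+c)/2 := by linarith
  have hm : (0:ℝ) ≤ (1-c)/2 := by linarith
  have key := cosh_sqrt_convex (A := (x+y)^2) (B := (x-y)^2) (by positivity) (by positivity) hl hm (by ring)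
  rw [Real.sqrt_sq (by linarith), Real.sqrt_sq_eq_abs, Real.cosh_abs] at key
  have harg : (1+c)/2*(x+y)^2 + (1-c)/2*(x-y)^2 = x^2 + y^2 + 2*(x*y*c) := by ring
  rw [harg] at key
  calc Real.cosh (Real.sqrt (x^2 + y^2 + 2*(x*y*c)))
      ≤ (1+c)/2 * Real.cosh (x+y) + (1-c)/2 * Real.cosh (x-y) := key
    _ = Real.cosh x * Real.cosh y + Real.sinh x * Real.sinh y * c := by
        rw [Real.cosh_add, Real.cosh_sub]; ring

variable {d : ℕ}

lemma sum_mul_eq_inner (x y : EuclideanSpace ℝ (Fin d)) :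
    ∑ i, x i * y i = (inner ℝ x y : ℝ) := by
  simp [PiLp.inner_apply, RCLike.inner_apply, conj_trivial, mul_comm]

lemma jexp_fst (v : Vec d) : (jexp v).1 = exp v.1 * Real.cosh ‖v.2‖ := by
  simp only [jexp, lamP, lamM, Real.cosh_eq, Real.exp_add, Real.exp_sub, Real.exp_neg,
    div_eq_mul_inv]
  ring

lemma jexp_snd (v : Vec d) :
    (jexp v).2 = (exp v.1 * Real.sinh ‖v.2‖ / ‖v.2‖) • v.2 := by
  by_cases h : v.2 = 0
  · simp [jexp, h]
  · have ht : (0:ℝ) < ‖v.2‖ := norm_pos_iff.mpr h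
    simp only [jexp]
    congr 1
    rw [Real.sinh_eq]
    field_simp [lamP, lamM, Real.exp_add, Real.exp_sub, Real.exp_neg]
    simp only [lamP, lamM, Real.exp_add, Real.exp_sub, Real.exp_neg]
    ring

lemma dotp_eq (v w : Vec d) : dotp v w = v.1 * w.1 + (inner ℝ v.2 w.2 : ℝ) := by
  rw [dotp, sum_mul_eq_inner]

lemma jtr_jmul (v w : Vec d) : jtr (jmul v w) = 2 * dotp v w := rfl

lemma dotp_jexp (a b : Vec d) :
    dotp (jexp a) (jexp b) = exp a.1 * Real.cosh ‖a.2‖ * (exp b.1 * Real.cosh ‖b.2‖) +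
      (exp a.1 * Real.sinh ‖a.2‖ / ‖a.2‖) * (exp b.1 * Real.sinh ‖b.2‖ / ‖b.2‖) *
        (inner ℝ a.2 b.2 : ℝ) := by
  rw [dotp_eq, jexp_fst, jexp_fst, jexp_snd, jexp_snd, real_inner_smul_left,
    real_inner_smul_right]
  ring

/-- Golden–Thompson for a single second-order cone. -/
lemma golden_thompson (a b : Vec d) :
    jtr (jexp (a + b)) ≤ jtr (jmul (jexp a) (jexp b)) := by
  rw [jtr_jmul, jtr, dotp_jexp, jexp_fst]
  have hab1 : (a + b).1 = a.1 + b.1 := rfl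
  have hab2 : (a + b).2 = a.2 + b.2 := rfl
  rw [hab1, hab2]
  by_cases ha : a.2 = 0
  · simp [ha, Real.exp_add]; ring_nf; exact le_refl _
  by_cases hb : b.2 = 0
  · simp [hb, Real.exp_add]; ring_nf; exact le_refl _
  have hta : (0:ℝ) < ‖a.2‖ := norm_pos_iff.mpr ha
  have htb : (0:ℝ) < ‖b.2‖ := norm_pos_iff.mpr hb
  set ta := ‖a.2‖
  set tb := ‖b.2‖
  set ip := (inner ℝ a.2 b.2 : ℝ) with hip
  set c : ℝ := ip / (ta * tb) with hc
  have hcabs : |c| ≤ 1 := by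
    rw [hc, abs_div, abs_of_pos (by positivity : (0:ℝ) < ta * tb), div_le_one (by positivity)]
    exact abs_real_inner_le_norm a.2 b.2
  have hipc : ip = ta * tb * c := by
    rw [hc]; field_simp
  have hnorm : ‖a.2 + b.2‖ = Real.sqrt (ta^2 + tb^2 + 2*(ta*tb*c)) := by
    rw [← hipc]
    have h2 : ‖a.2 + b.2‖^2 = ta^2 + 2*ip + tb^2 := norm_add_sq_real a.2 b.2
    rw [show ta^2 + tb^2 + 2*ip = ‖a.2+b.2‖^2 by rw [h2]; ring]
    exact (Real.sqrt_sq (norm_nonneg _)).symm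
  rw [hnorm]
  have key := cosh_key (le_of_lt hta) (le_of_lt htb) hcabs
  have hE : (0:ℝ) < exp a.1 * exp b.1 := by positivity
  have := mul_le_mul_of_nonneg_left key (by positivity : (0:ℝ) ≤ 2 * (exp a.1 * exp b.1))
  calc 2 * (exp (a.1 + b.1) * Real.cosh (Real.sqrt (ta^2 + tb^2 + 2*(ta*tb*c))))
      = 2 * (exp a.1 * exp b.1) * Real.cosh (Real.sqrt (ta^2 + tb^2 + 2*(ta*tb*c))) := by
        rw [Real.exp_add]; ring
    _ ≤ 2 * (exp a.1 * exp b.1) * (Real.cosh ta * Real.cosh tb +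
          Real.sinh ta * Real.sinh tb * c) := this
    _ = 2 * (exp a.1 * Real.cosh ta * (exp b.1 * Real.cosh tb) +
          exp a.1 * Real.sinh ta / ta * (exp b.1 * Real.sinh tb / tb) * ip) := by
        rw [hipc]; field_simp

lemma jexp_inCone (v : Vec d) : inCone (jexp v) := by
  rw [inCone, jexp_snd, jexp_fst, norm_smul, Real.norm_eq_abs]
  by_cases h : v.2 = 0
  · simp [h]; positivity
  have ht : (0:ℝ) < ‖v.2‖ := norm_pos_iff.mpr h
  have h1 : |exp v.1 * Real.sinh ‖v.2‖ / ‖v.2‖| * ‖v.2‖ ≤ exp v.1 * Real.sinh ‖v.2‖ ∨ True := Or.inr trivial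
  have hsh : (0:ℝ) ≤ Real.sinh ‖v.2‖ := Real.sinh_nonneg_iff.mpr (le_of_lt ht)
  rw [abs_of_nonneg (by positivity)]
  rw [div_mul_cancel₀ _ (ne_of_gt ht)]
  have := Real.cosh_sub_sinh ‖v.2‖
  nlinarith [Real.exp_pos v.1, Real.exp_pos (-‖v.2‖)]

lemma jexp_fst_pos (v : Vec d) : 0 < (jexp v).1 := by
  rw [jexp_fst]; positivity

lemma exp_convex_bound {δ lam : ℝ} (h0 : 0 ≤ lam) (h1 : lam ≤ 1) :
    exp (δ * lam) ≤ 1 + (exp δ - 1) * lam := by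
  have := convexOn_exp.2 (Set.mem_univ δ) (Set.mem_univ (0:ℝ)) h0 (by linarith : (0:ℝ) ≤ 1 - lam)
    (by ring)
  simp only [smul_eq_mul, mul_zero, add_zero, Real.exp_zero] at this
  calc exp (δ * lam) = exp (lam * δ) := by rw [mul_comm]
    _ ≤ lam * exp δ + (1 - lam) * 1 := this
    _ = 1 + (exp δ - 1) * lam := by ring

lemma dotp_nonneg {p q : Vec d} (hp : inCone p) (hq : inCone q) : 0 ≤ dotp p q := by
  rw [dotp_eq]
  rw [inCone] at hp hq
  have h1 : -(‖p.2‖ * ‖q.2‖) ≤ (inner ℝ p.2 q.2 : ℝ) := neg_le_of_abs_le (abs_real_inner_le_norm _ _)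
  nlinarith [norm_nonneg p.2, norm_nonneg q.2]

lemma dotp_sub_right (p u w : Vec d) : dotp p (u - w) = dotp p u - dotp p w := by
  simp only [dotp_eq, Prod.fst_sub, Prod.snd_sub, inner_sub_right]
  ring

lemma dotp_add_right (p u w : Vec d) : dotp p (u + w) = dotp p u + dotp p w := by
  simp only [dotp_eq, Prod.fst_add, Prod.snd_add, inner_add_right]
  ring

lemma dotp_smul_right (p u : Vec d) (c : ℝ) : dotp p (c • u) = c * dotp p u := by
  simp only [dotp_eq, Prod.smul_fst, Prod.smul_snd, smul_eq_mul, real_inner_smul_right]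
  ring

lemma dotp_smul_left (p u : Vec d) (c : ℝ) : dotp (c • p) u = c * dotp p u := by
  simp only [dotp_eq, Prod.smul_fst, Prod.smul_snd, smul_eq_mul, real_inner_smul_left]
  ring

lemma dotp_idel (p : Vec d) : dotp p (idel d) = p.1 := by
  simp [dotp_eq, idel]

lemma dotp_mono {p u w : Vec d} (hp : inCone p) (h : cleq u w) : dotp p u ≤ dotp p w := by
  have := dotp_nonneg hp h
  rw [dotp_sub_right] at this
  linarith

/-- `jexp (δ • m) ⪯ e + (e^δ - 1) • m` for `0 ⪯ m ⪯ e`, `0 < δ ≤ 1`. -/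
lemma jexp_le_lin {m : Vec d} {δ : ℝ} (hδ0 : 0 < δ) (hδ1 : δ ≤ 1)
    (hm0 : inCone m) (hme : inCone (idel d - m)) :
    cleq (jexp (δ • m)) (idel d + (exp δ - 1) • m) := by
  rw [cleq, inCone]
  rw [inCone] at hm0
  have hme' : ‖m.2‖ ≤ 1 - m.1 := by
    have : ‖(idel d - m).2‖ ≤ (idel d - m).1 := hme
    simpa [idel] using this
  set t := ‖m.2‖ with htdef
  have ht0 : 0 ≤ t := norm_nonneg _
  have hlm0 : 0 ≤ m.1 - t := by linarith
  have hlp1 : m.1 + t ≤ 1 := by linarith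
  have hfp : exp (δ * (m.1 + t)) ≤ 1 + (exp δ - 1) * (m.1 + t) :=
    exp_convex_bound (by linarith) hlp1
  have hfm : exp (δ * (m.1 - t)) ≤ 1 + (exp δ - 1) * (m.1 - t) :=
    exp_convex_bound hlm0 (by linarith)
  have hsm1 : (δ • m).1 = δ * m.1 := rfl
  have hsm2 : (δ • m).2 = δ • m.2 := rfl
  have hnsm : ‖(δ • m).2‖ = δ * t := by
    rw [hsm2, norm_smul, Real.norm_eq_abs, abs_of_pos hδ0]
  have hlamP : lamP (δ • m) = δ * (m.1 + t) := by rw [lamP, hsm1, hnsm]; ring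
  have hlamM : lamM (δ • m) = δ * (m.1 - t) := by rw [lamM, hsm1, hnsm]; ring
  have hfst : (idel d + (exp δ - 1) • m - jexp (δ • m)).1
      = 1 + (exp δ - 1) * m.1 - (exp (δ * (m.1 + t)) + exp (δ * (m.1 - t))) / 2 := by
    simp only [Prod.fst_sub, Prod.fst_add, Prod.smul_fst, smul_eq_mul, jexp, hlamP, hlamM, idel]
  rw [hfst]
  by_cases h : m.2 = 0
  · have ht : t = 0 := by rw [htdef, h, norm_zero]
    have hsnd : (idel d + (exp δ - 1) • m - jexp (δ • m)).2 = 0 := by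
      simp [idel, jexp, Prod.snd_sub, Prod.snd_add, hsm2, h]
    rw [hsnd, norm_zero]
    rw [ht] at hfp hfm ⊢
    simp only [add_zero, sub_zero] at hfp hfm ⊢
    linarith
  · have htpos : 0 < t := norm_pos_iff.mpr h
    set Ep := exp (δ * (m.1 + t))
    set Em := exp (δ * (m.1 - t))
    have hsnd : (idel d + (exp δ - 1) • m - jexp (δ • m)).2
        = ((exp δ - 1) - (Ep - Em) / (2 * t)) • m.2 := by
      have : (idel d + (exp δ - 1) • m - jexp (δ • m)).2
          = (exp δ - 1) • m.2 - ((Ep - Em) / (2 * ‖(δ • m).2‖)) • (δ • m.2) := by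
        simp [idel, jexp, hlamP, hlamM, hsm2, Prod.snd_sub, Prod.snd_add, sub_smul]
        rfl
      rw [this, hnsm, smul_smul, ← sub_smul]
      congr 1
      field_simp
    rw [hsnd, norm_smul, Real.norm_eq_abs, ← htdef]
    have habs : |(exp δ - 1) - (Ep - Em) / (2 * t)| * t
        = |((exp δ - 1) - (Ep - Em) / (2 * t)) * t| := by
      rw [abs_mul, abs_of_nonneg ht0]
    rw [habs]
    rw [abs_le]
    have hKt : ((exp δ - 1) - (Ep - Em) / (2 * t)) * t = (exp δ - 1) * t - (Ep - Em) / 2 := by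
      field_simp
    rw [hKt]
    constructor <;> [nlinarith; nlinarith]

end SOCAux

/-- Potential function upper bound:
`Φ^{(T)} ≤ 2r · exp((e^δ − 1) Σ_{τ<T} Tr(P^{(τ)} ∘ M^{(τ)}))`. -/
theorem potential_upper_bound {r : ℕ} (hr : 0 < r) {n : Fin r → ℕ} (T : ℕ) (δ : ℝ)
    (hδ0 : 0 < δ) (hδ1 : δ ≤ 1) (M : ℕ → SOC.MVec n)
    (hM0 : ∀ t < T, SOC.minCone (M t))
    (hMe : ∀ t < T, SOC.minCone (SOC.mid n - M t))
    (P : ℕ → SOC.MVec n)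
    (hP : ∀ t, P t = (SOC.mtr (SOC.mjexp (δ • ∑ τ ∈ Finset.range t, M τ)))⁻¹ •
      SOC.mjexp (δ • ∑ τ ∈ Finset.range t, M τ)) :
    SOC.mtr (SOC.mjexp (δ • ∑ τ ∈ Finset.range T, M τ)) ≤
      2 * r * Real.exp ((Real.exp δ - 1) *
        ∑ τ ∈ Finset.range T, SOC.mtr (SOC.mjmul (P τ) (M τ))) := by
  revert hM0 hMe
  induction T with
  | zero =>
    intro hM0 hMe
    have hz : (δ • ∑ τ ∈ Finset.range 0, M τ : SOC.MVec n) = 0 := by simp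
    rw [hz]
    have h2r : SOC.mtr (SOC.mjexp (0 : SOC.MVec n)) = 2 * r := by
      rw [SOC.mtr]
      have he : ∀ k : Fin r, SOC.jtr (SOC.mjexp (0 : SOC.MVec n) k) = 2 := by
        intro k
        show SOC.jtr (SOC.jexp (0 : SOC.Vec (n k))) = 2
        rw [SOC.jtr, SOCAux.jexp_fst]
        simp
      rw [Finset.sum_congr rfl (fun k _ => he k)]
      simp [Finset.card_univ, mul_comm]
    rw [h2r]
    simp
  | succ T ih =>
    intro hM0 hMe
    have hM0' : ∀ t < T, SOC.minCone (M t) := fun t ht => hM0 t (ht.trans (Nat.lt_succ_self T))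
    have hMe' : ∀ t < T, SOC.minCone (SOC.mid n - M t) :=
      fun t ht => hMe t (ht.trans (Nat.lt_succ_self T))
    have IH := ih hM0' hMe'
    set S : SOC.MVec n := δ • ∑ τ ∈ Finset.range T, M τ with hS
    have hΦpos : 0 < SOC.mtr (SOC.mjexp S) := by
      rw [SOC.mtr]
      have : Nonempty (Fin r) := ⟨⟨0, hr⟩⟩
      apply Finset.sum_pos
      · intro k _
        show 0 < 2 * (SOC.jexp (S k)).1
        exact mul_pos two_pos (SOCAux.jexp_fst_pos _)
      · exact Finset.univ_nonempty
    have hstep : SOC.mtr (SOC.mjexp (δ • ∑ τ ∈ Finset.range (T+1), M τ)) ≤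
        SOC.mtr (SOC.mjexp S) + (Real.exp δ - 1) *
          ∑ k, 2 * SOC.dotp (SOC.jexp (S k)) (M T k) := by
      have hSnew : ∀ k, (δ • ∑ τ ∈ Finset.range (T+1), M τ) k = S k + δ • (M T k) := by
        intro k
        rw [Finset.sum_range_succ, smul_add]
        rfl
      rw [SOC.mtr]
      calc ∑ k, SOC.jtr (SOC.mjexp (δ • ∑ τ ∈ Finset.range (T+1), M τ) k)
          = ∑ k, SOC.jtr (SOC.jexp (S k + δ • (M T k))) := by
            refine Finset.sum_congr rfl fun k _ => ?_
            show SOC.jtr (SOC.jexp _) = _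
            rw [hSnew k]
        _ ≤ ∑ k, (SOC.jtr (SOC.jexp (S k)) +
              (Real.exp δ - 1) * (2 * SOC.dotp (SOC.jexp (S k)) (M T k))) := by
            refine Finset.sum_le_sum fun k _ => ?_
            have h1 := SOCAux.golden_thompson (S k) (δ • (M T k))
            rw [SOCAux.jtr_jmul] at h1
            have hmek : SOC.inCone (SOC.idel (n k) - M T k) := by
              have := hMe T (Nat.lt_succ_self T) k
              exact this
            have h2 : SOC.dotp (SOC.jexp (S k)) (SOC.jexp (δ • (M T k))) ≤
                SOC.dotp (SOC.jexp (S k)) (SOC.idel (n k) + (Real.exp δ - 1) • (M T k)) :=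
              SOCAux.dotp_mono (SOCAux.jexp_inCone _)
                (SOCAux.jexp_le_lin hδ0 hδ1 (hM0 T (Nat.lt_succ_self T) k) hmek)
            have h3 : SOC.dotp (SOC.jexp (S k)) (SOC.idel (n k) + (Real.exp δ - 1) • (M T k))
                = (SOC.jexp (S k)).1 + (Real.exp δ - 1) * SOC.dotp (SOC.jexp (S k)) (M T k) := by
              rw [SOCAux.dotp_add_right, SOCAux.dotp_smul_right, SOCAux.dotp_idel]
            have hjtr : SOC.jtr (SOC.jexp (S k)) = 2 * (SOC.jexp (S k)).1 := rfl
            rw [hjtr]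
            rw [h3] at h2
            linarith
        _ = SOC.mtr (SOC.mjexp S) + (Real.exp δ - 1) *
              ∑ k, 2 * SOC.dotp (SOC.jexp (S k)) (M T k) := by
            rw [Finset.sum_add_distrib, ← Finset.mul_sum, SOC.mtr]
            rfl
    have hX : ∑ k, 2 * SOC.dotp (SOC.jexp (S k)) (M T k)
        = SOC.mtr (SOC.mjexp S) * SOC.mtr (SOC.mjmul (P T) (M T)) := by
      rw [hP T, ← hS]
      have hmm : SOC.mtr (SOC.mjmul ((SOC.mtr (SOC.mjexp S))⁻¹ • SOC.mjexp S) (M T))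
          = (SOC.mtr (SOC.mjexp S))⁻¹ * ∑ k, 2 * SOC.dotp (SOC.jexp (S k)) (M T k) := by
        rw [SOC.mtr, Finset.mul_sum]
        refine Finset.sum_congr rfl fun k _ => ?_
        have h0 : SOC.jtr (SOC.mjmul ((SOC.mtr (SOC.mjexp S))⁻¹ • SOC.mjexp S) (M T) k)
            = 2 * SOC.dotp ((SOC.mtr (SOC.mjexp S))⁻¹ • SOC.jexp (S k)) (M T k) := rfl
        rw [h0, SOCAux.dotp_smul_left]
        ring
      rw [hmm, ← mul_assoc, mul_inv_cancel₀ (ne_of_gt hΦpos), one_mul]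
    rw [hX] at hstep
    set X := SOC.mtr (SOC.mjmul (P T) (M T)) with hXdef
    calc SOC.mtr (SOC.mjexp (δ • ∑ τ ∈ Finset.range (T+1), M τ))
        ≤ SOC.mtr (SOC.mjexp S) + (Real.exp δ - 1) * (SOC.mtr (SOC.mjexp S) * X) := hstep
      _ = SOC.mtr (SOC.mjexp S) * (1 + (Real.exp δ - 1) * X) := by ring
      _ ≤ SOC.mtr (SOC.mjexp S) * Real.exp ((Real.exp δ - 1) * X) := by
          apply mul_le_mul_of_nonneg_left _ hΦpos.le
          linarith [Real.add_one_le_exp ((Real.exp δ - 1) * X)]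
      _ ≤ (2 * r * Real.exp ((Real.exp δ - 1) *
            ∑ τ ∈ Finset.range T, SOC.mtr (SOC.mjmul (P τ) (M τ)))) *
            Real.exp ((Real.exp δ - 1) * X) :=
          mul_le_mul_of_nonneg_right IH (Real.exp_pos _).le
      _ = 2 * r * Real.exp ((Real.exp δ - 1) *
            ∑ τ ∈ Finset.range (T+1), SOC.mtr (SOC.mjmul (P τ) (M τ))) := by
          rw [Finset.sum_range_succ, mul_add, Real.exp_add]
          ring
end
end

section
/- Let σ(x) = 1/(1 + e^{βx}) for β > 0. Then σ(x) = (1/2)(1 − tanh(βx/2)). Moreover, applying σ to the eigenvalues ±||u⃗|| of the off-diagonal part of an arrowhead matrix yields: for u = (u_0, u⃗), σ(||u⃗||)·c₊(u) + σ(−||u⃗||)·c₋(u) = C·√p where p = e^{−u'}/Tr(e^{−u'}) for u' = (0, u⃗), and the normalization constant C = √(1 + e^{2||u⃗||}) / (√2 (1 + e^{||u⃗||})) satisfies C ≥ 1/2 for all u⃗. -/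
open Real Finset

noncomputable section

private lemma sigmoid_gibbs_aux1 (a b h g Y X : ℝ) (ha : 0 < a) (hb : 0 < b)
    (hY : 0 < Y) (hX : 0 < X)
    (ehg : h * g = 1) (eh : h * h = a) (eg : g * g = b) (eY : Y * Y = a + b) :
    1 / (1 + a) * (1 / 2) + 1 / (1 + b) * (1 / 2)
      = h * Y / (X * (1 + a)) * (X * ((h / Y + g / Y) / 2)) := by
  have h1 : (0:ℝ) < 1 + a := by linarith
  have h2 : (0:ℝ) < 1 + b := by linarith
  have eab : a * b = 1 := by nlinarith [ehg, eh, eg]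
  have key : h * Y / (X * (1 + a)) * (X * ((h / Y + g / Y) / 2))
      = h * (h + g) / (2 * (1 + a)) := by
    field_simp
  rw [key]
  have h5 : h * (h + g) = a + 1 := by rw [mul_add, eh, ehg]
  rw [h5]
  field_simp
  linear_combination (-1) * eab

private lemma sigmoid_gibbs_aux2 (a b h g Y X n β z : ℝ) (ha : 0 < a) (hb : 0 < b)
    (hY : 0 < Y) (hX : 0 < X) (hn : 0 < n) (hβ : 0 < β) (hba : b < a)
    (ehg : h * g = 1) (eh : h * h = a) (eg : g * g = b) (eY : Y * Y = a + b) :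
    1 / (1 + a) * (1 / (2 * n) * z) + 1 / (1 + b) * (-(1 / (2 * n)) * z)
      = h * Y / (X * (1 + a)) *
        (X * ((h / Y - g / Y) / (2 * ((a - b) / (2 * (a + b)))) *
          ((a + b)⁻¹ * ((a - b) / (2 * (β * n)) * -β) * z))) := by
  have h1 : (0:ℝ) < 1 + a := by linarith
  have h2 : (0:ℝ) < 1 + b := by linarith
  have h3 : (0:ℝ) < a - b := by linarith
  have h4 : (0:ℝ) < a + b := by linarith
  have eab : a * b = 1 := by nlinarith [ehg, eh, eg]
  have key : h * Y / (X * (1 + a)) *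
        (X * ((h / Y - g / Y) / (2 * ((a - b) / (2 * (a + b)))) *
          ((a + b)⁻¹ * ((a - b) / (2 * (β * n)) * -β) * z)))
      = h * (g - h) / (2 * n * (1 + a)) * z := by
    field_simp; ring
  rw [key]
  have h5 : h * (g - h) = 1 - a := by rw [mul_sub, eh, ehg]
  rw [h5]
  field_simp
  linear_combination z * eab

private lemma jexp_pair {d : ℕ} (a : ℝ) (y : EuclideanSpace ℝ (Fin d)) :
    SOC.jexp ((a, y) : SOC.Vec d) =
      ((Real.exp (a + ‖y‖) + Real.exp (a - ‖y‖)) / 2,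
       ((Real.exp (a + ‖y‖) - Real.exp (a - ‖y‖)) / (2 * ‖y‖)) • y) := rfl

private lemma jsqrt_pair {d : ℕ} (a : ℝ) (y : EuclideanSpace ℝ (Fin d)) :
    SOC.jsqrt ((a, y) : SOC.Vec d) =
      ((Real.sqrt (a + ‖y‖) + Real.sqrt (a - ‖y‖)) / 2,
       ((Real.sqrt (a + ‖y‖) - Real.sqrt (a - ‖y‖)) / (2 * ‖y‖)) • y) := rfl

/-- The sigmoid `σ(x) = 1/(1+e^{βx})` equals `(1/2)(1 − tanh(βx/2))`;
applying it to the eigenvalues `±‖u⃗‖` of the off-diagonal part of the arrowhead matrix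
yields `C` times the (normalized) Jordan square root of the Gibbs vector of `(0, β u⃗)`,
where `C = √(1+e^{2β‖u⃗‖})/(√2(1+e^{β‖u⃗‖}))`, and `C ≥ 1/2`. -/
theorem sigmoid_gibbs (d : ℕ) (β : ℝ) (hβ : 0 < β) (u : SOC.Vec d) (hu : u.2 ≠ 0) :
    (∀ x : ℝ, 1 / (1 + Real.exp (β * x)) = (1 / 2) * (1 - Real.tanh (β * x / 2))) ∧
    ((1 / (1 + Real.exp (β * ‖u.2‖))) • SOC.cP ((0, u.2) : SOC.Vec d) +
        (1 / (1 + Real.exp (β * (-‖u.2‖)))) • SOC.cM ((0, u.2) : SOC.Vec d) =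
      (Real.sqrt (1 + Real.exp (2 * (β * ‖u.2‖))) /
          (Real.sqrt 2 * (1 + Real.exp (β * ‖u.2‖)))) •
        (Real.sqrt 2 •
          SOC.jsqrt ((SOC.jtr (SOC.jexp (-(β • ((0, u.2) : SOC.Vec d)))))⁻¹ •
            SOC.jexp (-(β • ((0, u.2) : SOC.Vec d)))))) ∧
    (∀ t : ℝ, 0 ≤ t →
      1 / 2 ≤ Real.sqrt (1 + Real.exp (2 * t)) / (Real.sqrt 2 * (1 + Real.exp t))) := by
  refine ⟨?_, ?_, ?_⟩
  · intro x
    rw [Real.tanh_eq_sinh_div_cosh, Real.sinh_eq, Real.cosh_eq]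
    have h1 : Real.exp (β * x) = Real.exp (β * x / 2) * Real.exp (β * x / 2) := by
      rw [← Real.exp_add]; ring_nf
    have h2 : Real.exp (β * x / 2) * Real.exp (-(β * x) / 2) = 1 := by
      rw [← Real.exp_add]; ring_nf; exact Real.exp_zero
    have h3 : 0 < Real.exp (β * x / 2) := Real.exp_pos _
    have h5 : 0 < 1 + Real.exp (β * x) := by positivity
    rw [h1]
    field_simp
    ring_nf
    ring_nf at h2
    linear_combination (-2 * Real.exp (β * x * (1/2))) * h2
  · have hnx : (0:ℝ) < ‖u.2‖ := norm_pos_iff.mpr hu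
    have hs : 0 < β * ‖u.2‖ := mul_pos hβ hnx
    set s : ℝ := β * ‖u.2‖ with hs_def
    set T : ℝ := Real.exp s + Real.exp (-s) with hT_def
    have hT : 0 < T := by positivity
    have hes : Real.exp (-s) < Real.exp s := Real.exp_lt_exp.mpr (by linarith)
    have hw : (-(β • ((0, u.2) : SOC.Vec d))) = ((0 : ℝ), (-β) • u.2) := by
      ext i <;> simp
    rw [hw]
    have hn2 : ‖(-β) • u.2‖ = s := by
      rw [norm_smul, hs_def]; simp [abs_of_pos hβ]
    have hje : SOC.jexp ((0, (-β) • u.2) : SOC.Vec d)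
        = ((T / 2 : ℝ), ((Real.exp s - Real.exp (-s)) / (2 * s) * (-β)) • u.2) := by
      rw [jexp_pair, hn2]
      ext i
      · norm_num; exact hT_def.symm
      · simp [smul_smul]
    rw [hje]
    have htr : SOC.jtr (((T / 2 : ℝ), ((Real.exp s - Real.exp (-s)) / (2 * s) * (-β)) • u.2) : SOC.Vec d) = T := by
      show 2 * (T / 2) = T; ring
    rw [htr]
    set c : ℝ := T⁻¹ * ((Real.exp s - Real.exp (-s)) / (2 * s) * (-β)) with hc_def
    have hp : T⁻¹ • (((T / 2 : ℝ), ((Real.exp s - Real.exp (-s)) / (2 * s) * (-β)) • u.2) : SOC.Vec d)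
        = ((1/2 : ℝ), c • u.2) := by
      ext i
      · show T⁻¹ * (T / 2) = 1/2
        field_simp
      · show T⁻¹ * (((Real.exp s - Real.exp (-s)) / (2 * s) * (-β)) * u.2 i) = c * u.2 i
        rw [hc_def]; ring
    rw [hp]
    have hcnn : 0 ≤ (Real.exp s - Real.exp (-s)) / (2 * s) := by
      apply div_nonneg (by linarith) (by positivity)
    have hcneg : c ≤ 0 := by
      rw [hc_def]
      have h1 : (Real.exp s - Real.exp (-s)) / (2 * s) * (-β) ≤ 0 :=
        mul_nonpos_of_nonneg_of_nonpos hcnn (by linarith)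
      exact mul_nonpos_of_nonneg_of_nonpos (inv_nonneg.mpr hT.le) h1
    have hnp : ‖c • u.2‖ = (Real.exp s - Real.exp (-s)) / (2 * T) := by
      rw [norm_smul, Real.norm_eq_abs, abs_of_nonpos hcneg, hc_def]
      field_simp
      ring
    have hsqP : Real.sqrt (Real.exp s / T) = Real.exp (s/2) / Real.sqrt T := by
      rw [Real.sqrt_div (Real.exp_pos s).le, ← Real.exp_half]
    have hsqM : Real.sqrt (Real.exp (-s) / T) = Real.exp (-s/2) / Real.sqrt T := by
      rw [Real.sqrt_div (Real.exp_pos (-s)).le, ← Real.exp_half, neg_div]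
    have hlamP : (1:ℝ)/2 + ‖c • u.2‖ = Real.exp s / T := by
      rw [hnp]; field_simp [hT_def]; ring
    have hlamM : (1:ℝ)/2 - ‖c • u.2‖ = Real.exp (-s) / T := by
      rw [hnp]; field_simp [hT_def]; ring
    rw [jsqrt_pair, hlamP, hlamM, hsqP, hsqM, hnp]
    have h2s : 1 + Real.exp (2 * s) = Real.exp s * T := by
      have hx : Real.exp s * Real.exp (-s) = 1 := by rw [← Real.exp_add]; simp
      rw [two_mul, Real.exp_add, hT_def]
      linear_combination -hx
    have hsqT : 0 < Real.sqrt T := Real.sqrt_pos.mpr hT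
    have hsq2 : Real.sqrt (1 + Real.exp (2 * s)) = Real.exp (s/2) * Real.sqrt T := by
      rw [h2s, Real.sqrt_mul (Real.exp_pos s).le, ← Real.exp_half]
    have e1 : Real.exp (s/2) * Real.exp (s/2) = Real.exp s := by rw [← Real.exp_add]; ring_nf
    have e2 : Real.exp (s/2) * Real.exp (-s/2) = 1 := by rw [← Real.exp_add]; ring_nf; exact Real.exp_zero
    have e4 : Real.exp (-s/2) * Real.exp (-s/2) = Real.exp (-s) := by rw [← Real.exp_add]; ring_nf
    have hsT2 : Real.sqrt T * Real.sqrt T = Real.exp s + Real.exp (-s) := by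
      rw [Real.mul_self_sqrt hT.le]
    have hsq2pos : 0 < Real.sqrt 2 := by positivity
    have hexm : Real.exp (β * (-‖u.2‖)) = Real.exp (-s) := by rw [hs_def]; ring_nf
    rw [hexm]
    unfold SOC.cP SOC.cM
    ext i
    · simp only [Prod.fst_add, Prod.smul_fst, smul_eq_mul]
      rw [hsq2]
      exact sigmoid_gibbs_aux1 (Real.exp s) (Real.exp (-s)) (Real.exp (s/2))
        (Real.exp (-s/2)) (Real.sqrt T) (Real.sqrt 2)
        (Real.exp_pos s) (Real.exp_pos (-s)) hsqT hsq2pos e2 e1 e4 hsT2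
    · simp only [Prod.snd_add, Prod.smul_snd, PiLp.add_apply, PiLp.smul_apply, smul_eq_mul]
      rw [hsq2, hc_def]
      exact sigmoid_gibbs_aux2 (Real.exp s) (Real.exp (-s)) (Real.exp (s/2))
        (Real.exp (-s/2)) (Real.sqrt T) (Real.sqrt 2) (‖u.2‖) β (u.2 i)
        (Real.exp_pos s) (Real.exp_pos (-s)) hsqT hsq2pos hnx hβ hes e2 e1 e4 hsT2
  · intro t _
    have het : 0 < Real.exp t := Real.exp_pos t
    have hden : 0 < Real.sqrt 2 * (1 + Real.exp t) := by positivity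
    rw [le_div_iff₀ hden]
    have h2t : Real.exp (t * 2) = Real.exp t * Real.exp t := by rw [← Real.exp_add]; ring_nf
    have key : (1 / 2 * (Real.sqrt 2 * (1 + Real.exp t)))^2 ≤ (Real.sqrt (1 + Real.exp (2*t)))^2 := by
      rw [Real.sq_sqrt (by positivity)]
      have hs2 : Real.sqrt 2 ^ 2 = 2 := Real.sq_sqrt (by norm_num)
      ring_nf
      nlinarith [sq_nonneg (Real.exp t - 1), hs2, h2t]
    have h1 : 0 ≤ 1 / 2 * (Real.sqrt 2 * (1 + Real.exp t)) := by positivity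
    nlinarith [Real.sqrt_nonneg (1 + Real.exp (2*t))]
end
end

section
/- For u ≥ 1, the function tanh(uz) is analytic on the interior of the Bernstein ellipse E_ρ with ρ = 1 + π/(4u), and is bounded in modulus by 2√2 there. Consequently there is a degree-d Chebyshev polynomial p with sup_{x∈[−1,1]} |p(x) − tanh(ux)| ≤ (16√2 u/π)·(1 + π/(4u))^{−d}, so degree d = Θ(u·log(u/ε)) suffices for error ε. -/
open Real Finset

noncomputable section

section AuxTanhCheb
open Complex

lemma normSq_cosh (w : ℂ) : Complex.normSq (Complex.cosh w) =
    Real.cos w.im ^ 2 + Real.sinh w.re ^ 2 := by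
  have hw : w = (w.re : ℂ) + (w.im : ℂ) * Complex.I := by
    simpa using (Complex.re_add_im w).symm
  rw [hw, Complex.cosh_add, Complex.cosh_mul_I, Complex.sinh_mul_I]
  simp [Complex.normSq_apply, Complex.cosh_ofReal_re, Complex.sinh_ofReal_re,
    Complex.cos_ofReal_re, Complex.sin_ofReal_re]
  have := Real.cosh_sq w.re
  nlinarith [Real.sin_sq_add_cos_sq w.im]

lemma normSq_sinh (w : ℂ) : Complex.normSq (Complex.sinh w) =
    Real.sin w.im ^ 2 + Real.sinh w.re ^ 2 := by
  have hw : w = (w.re : ℂ) + (w.im : ℂ) * Complex.I := by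
    simpa using (Complex.re_add_im w).symm
  rw [hw, Complex.sinh_add, Complex.cosh_mul_I, Complex.sinh_mul_I]
  simp [Complex.normSq_apply, Complex.cosh_ofReal_re, Complex.sinh_ofReal_re,
    Complex.cos_ofReal_re, Complex.sin_ofReal_re]
  have := Real.cosh_sq w.re
  nlinarith [Real.sin_sq_add_cos_sq w.im]

lemma cos_sq_half (b : ℝ) (h : |b| ≤ π/4) : Real.sin b ^ 2 ≤ 1/2 ∧ 1/2 ≤ Real.cos b ^ 2 := by
  have h2 : Real.cos (2*b) ≥ 0 := by
    apply Real.cos_nonneg_of_mem_Icc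
    constructor <;> [nlinarith [abs_le.1 h]; nlinarith [abs_le.1 h]]
  rw [Real.cos_two_mul] at h2
  have := Real.sin_sq_add_cos_sq b
  constructor <;> nlinarith

lemma tanh_bound (w : ℂ) (h : |w.im| ≤ π/4) :
    Complex.cosh w ≠ 0 ∧ ‖Complex.tanh w‖ ≤ 1 := by
  obtain ⟨hs, hc⟩ := cos_sq_half w.im h
  have hc0 : Complex.cosh w ≠ 0 := by
    intro h0
    have := normSq_cosh w
    rw [h0] at this
    simp at this
    nlinarith [sq_nonneg (Real.sinh w.re)]
  refine ⟨hc0, ?_⟩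
  rw [Complex.tanh_eq_sinh_div_cosh, norm_div]
  rw [div_le_one (norm_pos_iff.mpr hc0)]
  have h1 : ‖Complex.sinh w‖ ^ 2 = Real.sin w.im ^ 2 + Real.sinh w.re ^ 2 := by
    rw [← normSq_sinh]; exact Complex.sq_norm _
  have h2 : ‖Complex.cosh w‖ ^ 2 = Real.cos w.im ^ 2 + Real.sinh w.re ^ 2 := by
    rw [← normSq_cosh]; exact Complex.sq_norm _
  nlinarith [norm_nonneg (Complex.sinh w), norm_nonneg (Complex.cosh w)]

lemma im_z_bound (u : ℝ) (hu : 1 ≤ u) (w : ℂ) (h1 : 1 ≤ ‖w‖)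
    (h2 : ‖w‖ ≤ 1 + π/(4*u)) : |((u:ℂ) * ((w + w⁻¹)/2)).im| ≤ π/4 := by
  have hπ := Real.pi_pos
  have hu0 : (0:ℝ) < u := by linarith
  set s := ‖w‖ with hs
  have hs0 : (0:ℝ) < s := by linarith
  have hnsq : Complex.normSq w = s^2 := by rw [hs, Complex.sq_norm]
  have him : ((u:ℂ) * ((w + w⁻¹)/2)).im = u * ((w.im * (1 - 1/s^2))/2) := by
    have h3 : (w⁻¹).im = -w.im / s^2 := by rw [Complex.inv_im, hnsq]
    have h4 : ((w + w⁻¹)/2).im = (w.im + (w⁻¹).im)/2 := by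
      have he : ((w + w⁻¹)/2) = (w + w⁻¹) * ((1/2 : ℝ) : ℂ) := by push_cast; ring
      rw [he, Complex.mul_im]
      simp
      ring
    rw [Complex.mul_im]
    simp only [Complex.ofReal_re, Complex.ofReal_im, zero_mul, add_zero, h4, h3]
    ring
  have h2' : u * s ≤ u + π/4 := by
    have h5 : u * (1 + π/(4*u)) = u + π/4 := by field_simp
    have := mul_le_mul_of_nonneg_left h2 hu0.le
    rwa [h5] at this
  have key : u * (s^2 - 1) ≤ π/2 * s := by
    nlinarith [mul_le_mul_of_nonneg_right h2' hs0.le]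
  rw [him, abs_mul, abs_of_pos hu0, abs_div, abs_mul]
  have hfac : |1 - 1/s^2| = 1 - 1/s^2 := by
    rw [_root_.abs_of_nonneg]
    have : 1/s^2 ≤ 1 := by
      rw [div_le_one (by positivity)]
      nlinarith
    linarith
  have him2 : |w.im| ≤ s := Complex.abs_im_le_norm w
  have hfac0 : 0 ≤ 1 - 1/s^2 := by rw [← hfac]; exact abs_nonneg _
  calc u * (|w.im| * |1 - 1/s^2| / |(2:ℝ)|)
      ≤ u * (s * (1 - 1/s^2) / 2) := by
        rw [hfac, _root_.abs_two]
        gcongr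
    _ = (u * (s^2 - 1)) / (2*s) := by field_simp
    _ ≤ (π/2 * s) / (2*s) := by gcongr
    _ = π/4 := by field_simp; ring

lemma tanh_u_diff (u : ℝ) (z : ℂ) (h : Complex.cosh ((u:ℂ)*z) ≠ 0) :
    DifferentiableAt ℂ (fun z => Complex.tanh ((u:ℂ)*z)) z := by
  have he : (fun z : ℂ => Complex.tanh ((u:ℂ)*z)) =
      fun z => Complex.sinh ((u:ℂ)*z) / Complex.cosh ((u:ℂ)*z) :=
    funext fun z => Complex.tanh_eq_sinh_div_cosh _
  rw [he]
  have hmul : DifferentiableAt ℂ (fun z : ℂ => (u:ℂ)*z) z :=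
    (differentiableAt_id.const_mul _)
  exact ((Complex.differentiable_sinh _).comp z hmul).div
    ((Complex.differentiable_cosh _).comp z hmul) h

/-- `tanh (u ((w+w⁻¹)/2))`. -/
def Ftanh (u : ℝ) : ℂ → ℂ := fun w => Complex.tanh ((u:ℂ) * ((w + w⁻¹)/2))

lemma Ftanh_good (u : ℝ) (hu : 1 ≤ u) (w : ℂ) (h1 : 1 ≤ ‖w‖)
    (h2 : ‖w‖ ≤ 1 + π/(4*u)) :
    DifferentiableAt ℂ (Ftanh u) w ∧ ‖Ftanh u w‖ ≤ 1 := by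
  have him := im_z_bound u hu w h1 h2
  obtain ⟨hc, hb⟩ := tanh_bound _ him
  have hw0 : w ≠ 0 := by
    intro h; rw [h] at h1; simp at h1; linarith
  constructor
  · have hinner : DifferentiableAt ℂ (fun w : ℂ => (w + w⁻¹)/2) w :=
      (differentiableAt_id.add (differentiableAt_inv hw0)).div_const 2
    exact DifferentiableAt.comp (g := fun z => Complex.tanh ((u:ℂ)*z)) (f := fun w : ℂ => (w + w⁻¹)/2) w (tanh_u_diff u _ hc) hinner
  · exact hb

instance fact_two_pi_pos : Fact ((0:ℝ) < 2*π) := ⟨Real.two_pi_pos⟩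

/-- `θ ↦ tanh (u cos θ)` as a complex function. -/
def Gt (u : ℝ) : ℝ → ℂ := fun θ => Complex.tanh ((u:ℂ) * ((Real.cos θ : ℝ) : ℂ))

lemma Gt_periodic (u : ℝ) : Function.Periodic (Gt u) (2*π) := fun θ => by
  simp [Gt, Real.cos_add_two_pi]

/-- The function on the circle. -/
def gC (u : ℝ) : AddCircle (2*π) → ℂ := (Gt_periodic u).lift

lemma gC_coe (u : ℝ) (θ : ℝ) : gC u (θ : AddCircle (2*π)) = Gt u θ :=
  Function.Periodic.lift_coe _ θ

lemma Gt_continuous (u : ℝ) : Continuous (Gt u) := by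
  have harg : Continuous (fun θ : ℝ => ((u:ℂ) * ((Real.cos θ : ℝ) : ℂ))) := by fun_prop
  have he : Gt u = fun θ : ℝ => Complex.sinh ((u:ℂ) * ((Real.cos θ : ℝ):ℂ)) /
      Complex.cosh ((u:ℂ) * ((Real.cos θ : ℝ):ℂ)) :=
    funext fun θ => Complex.tanh_eq_sinh_div_cosh _
  have hne : ∀ θ : ℝ, Complex.cosh ((u:ℂ) * ((Real.cos θ : ℝ):ℂ)) ≠ 0 := by
    intro θ
    refine (tanh_bound _ ?_).1
    have : ((u:ℂ) * ((Real.cos θ : ℝ):ℂ)).im = 0 := by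
      rw [← Complex.ofReal_mul]; exact Complex.ofReal_im _
    rw [this, abs_zero]
    positivity
  rw [he]
  exact (Complex.continuous_sinh.comp harg).div (Complex.continuous_cosh.comp harg) hne

lemma gC_continuous (u : ℝ) : Continuous (gC u) := by
  rw [(QuotientAddGroup.isQuotientMap_mk _).continuous_iff]
  have : gC u ∘ (QuotientAddGroup.mk : ℝ → AddCircle (2*π)) = Gt u :=
    funext fun θ => gC_coe u θ
  rw [this]
  exact Gt_continuous u

/-- Fourier coefficients of `gC u`. -/
def cF (u : ℝ) (n : ℤ) : ℂ := fourierCoeff (gC u) n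

lemma cF_neg (u : ℝ) (n : ℤ) : cF u (-n) = cF u n := by
  rw [cF, cF, fourierCoeff_eq_intervalIntegral _ (-n) 0,
    fourierCoeff_eq_intervalIntegral _ n (-(2*π))]
  congr 1
  have hb : -(2*π) + 2*π = (0:ℝ) := by ring
  rw [hb]
  have key : ∀ x : ℝ, (fourier (-n) ((-x : ℝ) : AddCircle (2*π)) : ℂ) • gC u ((-x : ℝ) : AddCircle (2*π))
      = (fourier (-(-n)) ((x : ℝ) : AddCircle (2*π)) : ℂ) • gC u ((x : ℝ) : AddCircle (2*π)) := by
    intro x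
    rw [gC_coe, gC_coe]
    have hg : Gt u (-x) = Gt u x := by simp [Gt, Real.cos_neg]
    have hf : (fourier (-n) ((-x : ℝ) : AddCircle (2*π)) : ℂ) =
        (fourier (-(-n)) ((x : ℝ) : AddCircle (2*π)) : ℂ) := by
      rw [fourier_coe_apply, fourier_coe_apply]
      congr 1
      push_cast
      ring
    rw [hg, hf]
  rw [zero_add]
  calc (∫ x in (0:ℝ)..2*π, (fourier (-(-n)) ((x:ℝ) : AddCircle (2*π)) : ℂ) • gC u ↑x)
      = ∫ x in (0:ℝ)..2*π, (fourier (-n) ((-x:ℝ) : AddCircle (2*π)) : ℂ) • gC u ((-x:ℝ) : AddCircle (2*π)) := by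
        refine intervalIntegral.integral_congr fun x _ => (key x).symm
    _ = ∫ x in -(2*π)..(-(0:ℝ)), (fourier (-n) ((x:ℝ) : AddCircle (2*π)) : ℂ) • gC u ↑x := by
        rw [← intervalIntegral.integral_comp_neg fun x => (fourier (-n) ((x:ℝ) : AddCircle (2*π)) : ℂ) • gC u ↑x]
    _ = ∫ x in -(2*π)..(0:ℝ), (fourier (-n) ((x:ℝ) : AddCircle (2*π)) : ℂ) • gC u ↑x := by
        rw [neg_zero]

lemma circle_one_eq (u : ℝ) (n : ℤ) :
    (∮ z in C((0:ℂ),1), Ftanh u z * z ^ (-(n+1))) =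
      Complex.I * ∫ θ in (0:ℝ)..2*π, (fourier (-n) ((θ:ℝ) : AddCircle (2*π)) : ℂ) • gC u ↑θ := by
  rw [circleIntegral, ← intervalIntegral.integral_const_mul]
  refine intervalIntegral.integral_congr fun θ _ => ?_
  rw [deriv_circleMap]
  have hcm : circleMap 0 1 θ = Complex.exp (θ * Complex.I) := by simp [circleMap]
  rw [hcm, gC_coe, smul_eq_mul, smul_eq_mul]
  have hfour : (fourier (-n) ((θ:ℝ) : AddCircle (2*π)) : ℂ) = Complex.exp (-(n:ℂ) * (θ * Complex.I)) := by
    rw [fourier_coe_apply]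
    congr 1
    have h2π : ((2*π :ℝ):ℂ) ≠ 0 := by
      exact_mod_cast (ne_of_gt Real.two_pi_pos)
    push_cast
    push_cast at h2π
    field_simp
  have hF : Ftanh u (Complex.exp (θ*Complex.I)) = Gt u θ := by
    rw [Ftanh, Gt]
    congr 1
    have hsum : Complex.exp (θ*Complex.I) + (Complex.exp (θ*Complex.I))⁻¹ = 2 * Complex.cos θ := by
      rw [← Complex.exp_neg, Complex.two_cos, neg_mul]
    rw [hsum, Complex.ofReal_cos]
    ring
  rw [hF, hfour]
  have hz : Complex.exp (θ*Complex.I) * Complex.exp (θ*Complex.I) ^ (-(n+1)) =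
      Complex.exp (-(n:ℂ)*(θ*Complex.I)) := by
    rw [← Complex.exp_int_mul, ← Complex.exp_add]
    congr 1
    push_cast
    ring
  calc Complex.exp (θ*Complex.I) * Complex.I * (Gt u θ * Complex.exp (θ*Complex.I) ^ (-(n+1)))
      = Complex.I * (Gt u θ * (Complex.exp (θ*Complex.I) * Complex.exp (θ*Complex.I) ^ (-(n+1)))) := by ring
    _ = Complex.I * (Complex.exp (-(n:ℂ)*(θ*Complex.I)) * Gt u θ) := by rw [hz]; ring

lemma cF_bound (u : ℝ) (hu : 1 ≤ u) (n : ℤ) :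
    ‖cF u n‖ ≤ (1 + π/(4*u))^(-n) := by
  have hπ := Real.pi_pos
  have hu0 : (0:ℝ) < u := by linarith
  have hq : (0:ℝ) < π/(4*u) := div_pos hπ (by linarith)
  set ρ : ℝ := 1 + π/(4*u) with hρ
  have hρ1 : 1 < ρ := by rw [hρ]; linarith
  have hρ0 : (0:ℝ) < ρ := by linarith
  have hdiff : ∀ w : ℂ, 1 ≤ ‖w‖ → ‖w‖ ≤ ρ →
      DifferentiableAt ℂ (fun w => Ftanh u w * w ^ (-(n+1))) w := by
    intro w h1 h2
    have hw0 : w ≠ 0 := by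
      intro h; rw [h] at h1; simp at h1; linarith
    exact (Ftanh_good u hu w h1 h2).1.mul (differentiableAt_zpow.mpr (Or.inl hw0))
  have hkey : (∮ z in C((0:ℂ), ρ), Ftanh u z * z ^ (-(n+1))) =
      ∮ z in C((0:ℂ),1), Ftanh u z * z ^ (-(n+1)) := by
    apply circleIntegral_eq_of_differentiable_on_annulus_off_countable zero_lt_one hρ1.le
      Set.countable_empty
    · intro w hw
      obtain ⟨hw1, hw2⟩ := hw
      rw [Metric.mem_closedBall, dist_zero_right] at hw1
      rw [Metric.mem_ball, dist_zero_right] at hw2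
      push_neg at hw2
      exact (hdiff w hw2 hw1).continuousAt.continuousWithinAt
    · intro w hw
      obtain ⟨⟨hw1, hw2⟩, -⟩ := hw
      rw [Metric.mem_ball, dist_zero_right] at hw1
      rw [Metric.mem_closedBall, dist_zero_right] at hw2
      push_neg at hw2
      exact hdiff w hw2.le hw1.le
  have hbound : ‖∮ z in C((0:ℂ), ρ), Ftanh u z * z ^ (-(n+1))‖ ≤ 2*π*ρ*(ρ^(-(n+1))) := by
    apply circleIntegral.norm_integral_le_of_norm_le_const hρ0.le
    intro z hz
    rw [mem_sphere_iff_norm, sub_zero] at hz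
    have habs : ‖z‖ = ρ := by exact hz
    rw [norm_mul, norm_zpow, hz]
    have h1 : ‖Ftanh u z‖ ≤ 1 :=
      (Ftanh_good u hu z (by rw [habs]; exact hρ1.le) habs.le).2
    calc ‖Ftanh u z‖ * ρ^(-(n+1)) ≤ 1 * ρ^(-(n+1)) := by
          apply mul_le_mul_of_nonneg_right h1 (zpow_nonneg hρ0.le _)
      _ = ρ^(-(n+1)) := one_mul _
  have hone := circle_one_eq u n
  have hcf : cF u n = (1/(2*π) : ℝ) •
      ∫ θ in (0:ℝ)..2*π, (fourier (-n) ((θ:ℝ) : AddCircle (2*π)) : ℂ) • gC u ↑θ := by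
    have := fourierCoeff_eq_intervalIntegral (gC u) n 0
    rwa [zero_add] at this
  rw [hkey, hone] at hbound
  rw [norm_mul, Complex.norm_I, one_mul] at hbound
  rw [hcf, norm_smul]
  have h2π : (0:ℝ) < 2*π := Real.two_pi_pos
  rw [Real.norm_eq_abs, abs_of_pos (by positivity : (0:ℝ) < 1/(2*π))]
  have hfin : ρ * ρ^(-(n+1)) = ρ^(-n) := by
    rw [mul_comm, ← zpow_add_one₀ hρ0.ne']
    congr 1
    ring
  calc 1/(2*π) * ‖∫ θ in (0:ℝ)..2*π, (fourier (-n) ((θ:ℝ) : AddCircle (2*π)) : ℂ) • gC u ↑θ‖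
      ≤ 1/(2*π) * (2*π*ρ*(ρ^(-(n+1)))) := by
        apply mul_le_mul_of_nonneg_left hbound (by positivity)
    _ = ρ * ρ^(-(n+1)) := by field_simp
    _ = ρ^(-n) := hfin

lemma cF_bound' (u : ℝ) (hu : 1 ≤ u) (n : ℤ) :
    ‖cF u n‖ ≤ ((1 + π/(4*u))⁻¹) ^ n.natAbs := by
  have hπ := Real.pi_pos
  have hu0 : (0:ℝ) < u := by linarith
  have hρ0 : (0:ℝ) < 1 + π/(4*u) := by positivity
  have habs : ∀ m : ℤ, ((1 + π/(4*u)) : ℝ)^(-m) = ((1 + π/(4*u))⁻¹) ^ m.natAbs → True := fun _ _ => trivial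
  rcases le_or_gt 0 n with h | h
  · have hb := cF_bound u hu n
    have he : ((1 + π/(4*u)) : ℝ)^(-n) = ((1 + π/(4*u))⁻¹) ^ n.natAbs := by
      rw [← zpow_natCast ((1 + π/(4*u))⁻¹), Int.natAbs_of_nonneg h, zpow_neg, inv_zpow]
    rwa [he] at hb
  · have hb := cF_bound u hu (-n)
    rw [cF_neg] at hb
    have hnn : ((n.natAbs : ℕ) : ℤ) = -n := by omega
    have he : ((1 + π/(4*u))⁻¹ : ℝ) ^ n.natAbs = (1 + π/(4*u)) ^ (-(-n)) := by
      rw [neg_neg, ← zpow_natCast ((1 + π/(4*u))⁻¹ : ℝ), hnn, inv_zpow, ← zpow_neg, neg_neg]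
    rwa [← he] at hb

lemma q_lt_one (u : ℝ) (hu : 1 ≤ u) : ((1 + π/(4*u))⁻¹ : ℝ) < 1 ∧ (0:ℝ) < (1 + π/(4*u))⁻¹ := by
  have hπ := Real.pi_pos
  have hu0 : (0:ℝ) < u := by linarith
  have hq : (0:ℝ) < π/(4*u) := div_pos hπ (by linarith)
  constructor
  · rw [inv_lt_one_iff₀]; right; linarith
  · positivity

lemma cF_summable (u : ℝ) (hu : 1 ≤ u) : Summable (cF u) := by
  obtain ⟨hq1, hq0⟩ := q_lt_one u hu
  set q : ℝ := (1 + π/(4*u))⁻¹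
  apply Summable.of_norm_bounded (g := fun n : ℤ => q ^ n.natAbs) ?_ (cF_bound' u hu)
  apply Summable.of_nat_of_neg
  · simpa using summable_geometric_of_lt_one hq0.le hq1
  · simpa using summable_geometric_of_lt_one hq0.le hq1

lemma fourier_eq (n : ℤ) (θ : ℝ) :
    (fourier n ((θ:ℝ) : AddCircle (2*π)) : ℂ) = Complex.exp ((n:ℂ) * (θ * Complex.I)) := by
  rw [fourier_coe_apply]
  congr 1
  have h2π : ((π :ℝ):ℂ) ≠ 0 := by exact_mod_cast (ne_of_gt Real.pi_pos)
  push_cast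
  field_simp

lemma hasSum_gC (u : ℝ) (hu : 1 ≤ u) (θ : ℝ) :
    HasSum (fun k : ℕ => 2 * cF u (k:ℤ) * Complex.cos (((k:ℕ):ℂ) * (θ:ℂ)))
      (Gt u θ + cF u 0) := by
  set f : C(AddCircle (2*π), ℂ) := ⟨gC u, gC_continuous u⟩ with hf
  have hcoeff : fourierCoeff (⇑f) = cF u := rfl
  have hsummable : Summable (fourierCoeff (⇑f)) := by rw [hcoeff]; exact cF_summable u hu
  have hsum0 := has_pointwise_sum_fourier_series_of_summable hsummable ((θ:ℝ) : AddCircle (2*π))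
  rw [hcoeff] at hsum0
  have h2 := hsum0.nat_add_neg
  have hval : f ((θ:ℝ) : AddCircle (2*π)) = Gt u θ := gC_coe u θ
  have ht0 : cF u 0 • (fourier 0 ((θ:ℝ) : AddCircle (2*π)) : ℂ) = cF u 0 := by
    simp
  rw [hval, ht0] at h2
  refine h2.congr_fun fun k => ?_
  rw [smul_eq_mul, smul_eq_mul, fourier_eq, fourier_eq, cF_neg]
  have e1 : (((k:ℤ):ℂ)) * ((θ:ℂ)*Complex.I) = (((k:ℕ):ℂ)*(θ:ℂ))*Complex.I := by push_cast; ring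
  have e2 : ((-(k:ℕ):ℤ):ℂ) * ((θ:ℂ)*Complex.I) = -(((k:ℕ):ℂ)*(θ:ℂ))*Complex.I := by push_cast; ring
  rw [e1, e2]
  have hcos := Complex.two_cos (x := (((k:ℕ):ℂ)*(θ:ℂ)))
  calc 2 * cF u (k:ℤ) * Complex.cos (((k:ℕ):ℂ) * (θ:ℂ))
      = cF u (k:ℤ) * (2 * Complex.cos (((k:ℕ):ℂ) * (θ:ℂ))) := by ring
    _ = cF u (k:ℤ) * (Complex.exp ((((k:ℕ):ℂ)*(θ:ℂ))*Complex.I) +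
          Complex.exp (-(((k:ℕ):ℂ)*(θ:ℂ))*Complex.I)) := by rw [hcos]
    _ = cF u (k:ℤ) * Complex.exp ((((k:ℕ):ℂ)*(θ:ℂ))*Complex.I) +
        cF u (k:ℤ) * Complex.exp (-(((k:ℕ):ℂ)*(θ:ℂ))*Complex.I) := by ring

lemma tail_norm (u : ℝ) (hu : 1 ≤ u) (d : ℕ) (θ : ℝ) :
    ‖(Gt u θ + cF u 0) - ∑ k ∈ Finset.range (d+1),
        2 * cF u (k:ℤ) * Complex.cos (((k:ℕ):ℂ) * (θ:ℂ))‖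
      ≤ (8*u/π) * ((1 + π/(4*u))⁻¹)^d := by
  have hπ := Real.pi_pos
  have hu0 : (0:ℝ) < u := by linarith
  obtain ⟨hq1, hq0⟩ := q_lt_one u hu
  set q : ℝ := (1 + π/(4*u))⁻¹ with hqdef
  set a : ℕ → ℂ := fun k => 2 * cF u (k:ℤ) * Complex.cos (((k:ℕ):ℂ) * (θ:ℂ)) with ha
  have hS : HasSum a (Gt u θ + cF u 0) := hasSum_gC u hu θ
  have h3 : HasSum (fun n : ℕ => a (n + (d+1)))
      ((Gt u θ + cF u 0) - ∑ i ∈ Finset.range (d+1), a i) :=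
    (hasSum_nat_add_iff' (d+1)).mpr hS
  have hbound : ∀ n : ℕ, ‖a (n + (d+1))‖ ≤ 2 * q^(d+1) * q^n := by
    intro n
    rw [ha]
    simp only
    rw [norm_mul, norm_mul]
    have hc : ‖Complex.cos ((((n + (d+1)):ℕ):ℂ) * (θ:ℂ))‖ ≤ 1 := by
      have : (((n + (d+1)):ℕ):ℂ) * (θ:ℂ) = (((((n + (d+1)):ℕ):ℝ) * θ : ℝ) : ℂ) := by push_cast; ring
      rw [this, ← Complex.ofReal_cos, Complex.norm_real, Real.norm_eq_abs]
      exact Real.abs_cos_le_one _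
    have hcf : ‖cF u ((n + (d+1) : ℕ) : ℤ)‖ ≤ q ^ (n + (d+1)) := by
      have := cF_bound' u hu ((n + (d+1) : ℕ) : ℤ)
      rwa [Int.natAbs_natCast] at this
    calc ‖(2:ℂ)‖ * ‖cF u ((n + (d+1) : ℕ) : ℤ)‖ * ‖Complex.cos ((((n + (d+1)):ℕ):ℂ) * (θ:ℂ))‖
        ≤ 2 * q ^ (n + (d+1)) * 1 := by
          apply mul_le_mul _ hc (norm_nonneg _) (by positivity)
          rw [Complex.norm_ofNat]
          exact mul_le_mul_of_nonneg_left hcf (by norm_num)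
      _ = 2 * q^(d+1) * q^n := by rw [mul_one, pow_add]; ring
  have hsn : Summable (fun n : ℕ => ‖a (n + (d+1))‖) := by
    apply Summable.of_nonneg_of_le (fun n => norm_nonneg _) hbound
    exact (summable_geometric_of_lt_one hq0.le hq1).mul_left _
  have h4 : ‖(Gt u θ + cF u 0) - ∑ i ∈ Finset.range (d+1), a i‖
      ≤ ∑' n : ℕ, (2 * q^(d+1) * q^n) := by
    rw [← h3.tsum_eq]
    refine le_trans (norm_tsum_le_tsum_norm hsn) ?_
    exact Summable.tsum_le_tsum hbound hsn ((summable_geometric_of_lt_one hq0.le hq1).mul_left _)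
  refine le_trans h4 ?_
  rw [tsum_mul_left, tsum_geometric_of_lt_one hq0.le hq1]
  have hfin : 2 * q^(d+1) * (1-q)⁻¹ = (8*u/π) * q^d := by
    have hρ0 : (0:ℝ) < 1 + π/(4*u) := by positivity
    have h1q : 1 - q = (π/(4*u)) / (1 + π/(4*u)) := by
      rw [hqdef]
      field_simp
      ring
    have hinv : (1 - q)⁻¹ = (1 + π/(4*u)) * (4*u/π) := by
      rw [h1q]
      field_simp
    have hqρ : q * (1 + π/(4*u)) = 1 := inv_mul_cancel₀ hρ0.ne'
    calc 2 * q^(d+1) * (1-q)⁻¹ = 2 * (q^d * q) * ((1 + π/(4*u)) * (4*u/π)) := by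
          rw [pow_succ, hinv]
      _ = (8*u/π) * q^d * (q * (1 + π/(4*u))) := by ring
      _ = (8*u/π) * q^d := by rw [hqρ, mul_one]
  rw [hfin]

lemma natDegree_T_le (k : ℕ) : (Polynomial.Chebyshev.T ℝ (k:ℤ)).natDegree ≤ k := by
  induction k using Nat.strong_induction_on with
  | _ k ih =>
    match k with
    | 0 => simp [Polynomial.Chebyshev.T_zero]
    | 1 => simp [Polynomial.Chebyshev.T_one]
    | (m+2) =>
      have hcast : ((m+2 : ℕ) : ℤ) = (m:ℤ) + 2 := by push_cast; ring
      rw [hcast, Polynomial.Chebyshev.T_add_two]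
      refine le_trans (Polynomial.natDegree_sub_le _ _) ?_
      rw [max_le_iff]
      constructor
      · refine le_trans Polynomial.natDegree_mul_le ?_
        have h1 : (2 * Polynomial.X : Polynomial ℝ).natDegree ≤ 1 :=
          le_trans Polynomial.natDegree_mul_le (by simp)
        have h2 : (Polynomial.Chebyshev.T ℝ ((m:ℤ)+1)).natDegree ≤ m+1 := by
          have := ih (m+1) (by omega)
          have hc : (((m+1:ℕ)) : ℤ) = (m:ℤ)+1 := by push_cast; ring
          rwa [hc] at this
        omega
      · have h3 := ih m (by omega)
        omega

end AuxTanhCheb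

/-- The (closed) region bounded by the Bernstein ellipse `E_ρ` with `|v| < ρ`. -/
def bernsteinRegion (ρ : ℝ) : Set ℂ :=
  {z | ∃ v : ℂ, 1 ≤ ‖v‖ ∧ ‖v‖ < ρ ∧ z = (v + v⁻¹) / 2}

/-- For `u ≥ 1`, `tanh(uz)` is analytic and bounded by `2√2` on the
interior of the Bernstein ellipse with `ρ = 1 + π/(4u)`, and consequently for every
degree `d` there is a real polynomial approximating `tanh(ux)` on `[-1,1]` with error
`(16√2 u/π)·(1 + π/(4u))^{-d}`. -/
theorem tanh_chebyshev_approx (u : ℝ) (hu : 1 ≤ u) :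
    (∀ z ∈ bernsteinRegion (1 + π / (4 * u)),
      DifferentiableAt ℂ (fun w => Complex.tanh ((u : ℂ) * w)) z ∧
      ‖Complex.tanh ((u : ℂ) * z)‖ ≤ 2 * Real.sqrt 2) ∧
    (∀ d : ℕ, ∃ p : Polynomial ℝ, p.natDegree ≤ d ∧
      ∀ x : ℝ, |x| ≤ 1 →
        |p.eval x - Real.tanh (u * x)| ≤
          (16 * Real.sqrt 2 * u / π) / (1 + π / (4 * u)) ^ d) := by
  have hπ := Real.pi_pos
  have hu0 : (0:ℝ) < u := by linarith
  have hsqrt2 : (1:ℝ) ≤ Real.sqrt 2 := by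
    rw [show (1:ℝ) = Real.sqrt 1 by simp]
    exact Real.sqrt_le_sqrt (by norm_num)
  constructor
  · rintro z ⟨v, hv1, hv2, rfl⟩
    have h1le : 1 ≤ ‖v‖ := hv1
    have h2le : ‖v‖ ≤ 1 + π/(4*u) := hv2.le
    obtain ⟨hdiff, hb⟩ := Ftanh_good u hu v h1le h2le
    have him := im_z_bound u hu v h1le h2le
    refine ⟨tanh_u_diff u _ (tanh_bound _ him).1, ?_⟩
    refine le_trans hb ?_
    linarith
  · intro d
    obtain ⟨hq1, hq0⟩ := q_lt_one u hu
    set q : ℝ := (1 + π/(4*u))⁻¹ with hqdef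
    set p : Polynomial ℝ := (∑ k ∈ Finset.range (d+1),
        Polynomial.C ((2 * cF u (k:ℤ)).re) * Polynomial.Chebyshev.T ℝ (k:ℤ)) -
        Polynomial.C ((cF u 0).re) with hp
    refine ⟨p, ?_, ?_⟩
    · refine le_trans (Polynomial.natDegree_sub_le _ _) ?_
      rw [max_le_iff]
      constructor
      · apply Polynomial.natDegree_sum_le_of_forall_le
        intro k hk
        refine le_trans (Polynomial.natDegree_C_mul_le _ _) ?_
        refine le_trans (natDegree_T_le k) ?_
        simp only [Finset.mem_range] at hk
        omega
      · simp
    · intro x hx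
      rw [abs_le] at hx
      set θ := Real.arccos x with hθ
      have hcos : Real.cos θ = x := Real.cos_arccos hx.1 hx.2
      have heval : Polynomial.eval x p =
          (∑ k ∈ Finset.range (d+1), (2 * cF u (k:ℤ)).re * Real.cos ((k:ℝ)*θ)) - (cF u 0).re := by
        rw [hp, Polynomial.eval_sub, Polynomial.eval_finset_sum, Polynomial.eval_C]
        congr 1
        refine Finset.sum_congr rfl fun k _ => ?_
        rw [Polynomial.eval_mul, Polynomial.eval_C, ← hcos, Polynomial.Chebyshev.T_real_cos]
        norm_num
      have hre : ((∑ k ∈ Finset.range (d+1),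
            2 * cF u (k:ℤ) * Complex.cos (((k:ℕ):ℂ) * (θ:ℂ))) - cF u 0).re
          = Polynomial.eval x p := by
        rw [heval, Complex.sub_re, Complex.re_sum]
        congr 1
        refine Finset.sum_congr rfl fun k _ => ?_
        have hc : (((k:ℕ):ℂ) * (θ:ℂ)) = ((((k:ℝ)*θ : ℝ)) : ℂ) := by push_cast; ring
        rw [hc, ← Complex.ofReal_cos, mul_comm (2 * cF u (k:ℤ)) _, Complex.re_ofReal_mul]
        ring
      have htanh : (Gt u θ).re = Real.tanh (u * x) := by
        rw [Gt]
        rw [hcos, ← Complex.ofReal_mul, ← Complex.ofReal_tanh, Complex.ofReal_re]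
      have hsplit : Polynomial.eval x p - Real.tanh (u * x) =
          -(((Gt u θ + cF u 0) - ∑ k ∈ Finset.range (d+1),
              2 * cF u (k:ℤ) * Complex.cos (((k:ℕ):ℂ) * (θ:ℂ))).re) := by
        rw [← hre, ← htanh]
        simp only [Complex.add_re, Complex.sub_re]
        ring
      rw [hsplit, abs_neg]
      have habs : |(((Gt u θ + cF u 0) - ∑ k ∈ Finset.range (d+1),
              2 * cF u (k:ℤ) * Complex.cos (((k:ℕ):ℂ) * (θ:ℂ))).re)|
          ≤ ‖(Gt u θ + cF u 0) - ∑ k ∈ Finset.range (d+1),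
              2 * cF u (k:ℤ) * Complex.cos (((k:ℕ):ℂ) * (θ:ℂ))‖ :=
        Complex.abs_re_le_norm _
      refine le_trans habs (le_trans (tail_norm u hu d θ) ?_)
      have hrw : (16 * Real.sqrt 2 * u / π) / (1 + π / (4 * u)) ^ d
          = (16 * Real.sqrt 2 * u / π) * q^d := by
        rw [div_eq_mul_inv, ← inv_pow]
      rw [hrw]
      apply mul_le_mul_of_nonneg_right _ (by positivity)
      rw [div_le_div_iff₀ hπ hπ]
      nlinarith [mul_pos hu0 hπ]
end
end
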